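/- arXiv:2602.18612 — 3 statements merged into one kernel-verified Lean document; each statement's English description precedes it below -/
import Mathlib

section
/- Fix ℓ ≥ 1 and ℓ-multicompositions ν and μ of n. There is a bijection from ParMat♭_{ν,μ} to the set BCM_ℓ(ν,μ) of flagged ℓ×ℓ block composition matrices with row sum ν and column sum μ, under which a pair (A,P) with entries a^{(pq)}_{ij} and partitions η^{(pq)}_{ij} corresponds to the block composition matrix B whose entry b^{(pq)}_{ij} satisfies: the sum of the parts of b^{(pq)}_{ij} equals a^{(pq)}_{ij}, and for every t ≥ 1 the t-th part of η^{(pq)}_{ij} equals the sum of the parts of b^{(pq)}_{ij} in positions strictly greater than t. -/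
/-! Common definitions for a level-`ℓ` RSK correspondence.

* The alphabet `S = {a_b}` is encoded by `Letter := Lex (ℕ × ℕ)`, the letter `a_b`
  (with `a, b` now 0-indexed) being `toLex (b, a)`; the lexicographic order on the
  pairs `(b, a)` is exactly the order `1_1 < 2_1 < ⋯ < 1_2 < 2_2 < ⋯` of the paper.
* Compositions are lists of naturals (0-indexed parts, part `t` is `l.getD t 0`);
  partitions are weakly decreasing lists of positive naturals.
* All block/row/column indices `p, q ∈ {1, …, ℓ}` and `i, j, t ≥ 1` of the paper are
  0-indexed here, so e.g. the constraint `length ≤ min(p,q) - 1` becomes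
  `length ≤ min p q` for `p q : Fin ℓ`.
-/

/-- The alphabet `S`: the letter `a_b` is encoded as `toLex (b, a)`. -/
abbrev Letter : Type := Lex (ℕ × ℕ)

/-- The `t`-th row sum of a finitely supported matrix `ℕ × ℕ → ℕ`. -/
def rowSum (M : (ℕ × ℕ) →₀ ℕ) (t : ℕ) : ℕ :=
  ∑ p ∈ M.support, if p.1 = t then M p else 0

/-- The `t`-th column sum of a finitely supported matrix `ℕ × ℕ → ℕ`. -/
def colSum (M : (ℕ × ℕ) →₀ ℕ) (t : ℕ) : ℕ :=
  ∑ p ∈ M.support, if p.2 = t then M p else 0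

/-- `μ` is an `ℓ`-multicomposition of `n`. -/
def IsMultiComp (ℓ n : ℕ) (μ : Fin ℓ → List ℕ) : Prop :=
  ∑ i, (μ i).sum = n

/-- `l` is a partition: a weakly decreasing list of positive integers. -/
def IsPartitionList (l : List ℕ) : Prop :=
  List.Pairwise (· ≥ ·) l ∧ ∀ x ∈ l, 0 < x

/-- `lam` is an `ℓ`-multipartition of `n`. -/
def IsMultiPartition (ℓ n : ℕ) (lam : Fin ℓ → List ℕ) : Prop :=
  (∀ i, IsPartitionList (lam i)) ∧ ∑ i, (lam i).sum = n

/-- The set `ParMat♭_{ν,μ}`: pairs `(A, P)` of an `ℓ × ℓ` block ℕ-matrix `A` with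
`row(A) = ν`, `col(A) = μ`, and a family `P` of partitions `η^{(pq)}_{ij}` with largest part
at most `a^{(pq)}_{ij}` and at most `min(p,q) - 1` parts (`= min p q` in 0-indexed form). -/
def ParMat (ℓ : ℕ) (ν μ : Fin ℓ → List ℕ) :
    Set ((Fin ℓ → Fin ℓ → ((ℕ × ℕ) →₀ ℕ)) × (Fin ℓ → Fin ℓ → ℕ → ℕ → List ℕ)) :=
  {AP | (∀ s t, ∑ q, rowSum (AP.1 s q) t = (ν s).getD t 0) ∧
        (∀ s t, ∑ p, colSum (AP.1 p s) t = (μ s).getD t 0) ∧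
        (∀ p q i j, IsPartitionList (AP.2 p q i j)) ∧
        (∀ p q i j, ∀ x ∈ AP.2 p q i j, x ≤ AP.1 p q (i, j)) ∧
        (∀ p q i j, (AP.2 p q i j).length ≤ min (p : ℕ) (q : ℕ))}

/-- The cells of the Ferrers diagram of a composition `l` (0-indexed):
`(i, j)` with `j < l_i`. -/
def cells (l : List ℕ) : Finset (ℕ × ℕ) :=
  (Finset.range l.length ×ˢ Finset.range (l.foldr max 0)).filter
    (fun p => p.2 < l.getD p.1 0)

/-- `T` is a semistandard tableau of shape `l`: rows weakly increase, columns strictly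
increase, and (as a normalization pinning down the irrelevant values) `T` takes the
default value `d` outside the diagram. -/
def IsSSYT {α : Type*} [LinearOrder α] (l : List ℕ) (d : α) (T : ℕ → ℕ → α) : Prop :=
  (∀ i j, (i, j + 1) ∈ cells l → T i j ≤ T i (j + 1)) ∧
  (∀ i j, (i + 1, j) ∈ cells l → T i j < T (i + 1) j) ∧
  (∀ i j, (i, j) ∉ cells l → T i j = d)

/-- The multiset of entries of a tableau of shape `l`. -/
def entries {α : Type*} (l : List ℕ) (T : ℕ → ℕ → α) : Multiset α :=
  (cells l).val.map (fun p => T p.1 p.2)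

/-- The multiset in which `f a` occurs with multiplicity the `a`-th part of `c`. -/
def contentMultiset {α : Type*} (c : List ℕ) (f : ℕ → α) : Multiset α :=
  (Multiset.range c.length).bind (fun a => Multiset.replicate (c.getD a 0) (f a))

/-- The `μ`-alphabet `U_μ`: the letter `a_b` occurs with multiplicity `μ^{(b)}_a`. -/
def alphabetMultiset (ℓ : ℕ) (μ : Fin ℓ → List ℕ) : Multiset Letter :=
  ∑ b : Fin ℓ, contentMultiset (μ b) (fun a => toLex ((b : ℕ), a))

/-- The set `SST_ℓ(lam, μ)` of semistandard multitableaux of shape `lam` and content `μ`: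
`ℓ`-tuples of semistandard tableaux whose total entry multiset is `U_μ` and such that a
letter `a_b` occurs in the `i`-th tableau only if `b ≥ i` (the flagging condition). -/
def SSTset (ℓ : ℕ) (lam μ : Fin ℓ → List ℕ) : Set (Fin ℓ → ℕ → ℕ → Letter) :=
  {T | (∀ i, IsSSYT (lam i) (toLex (0, 0)) (T i)) ∧
       (∑ i, entries (lam i) (T i)) = alphabetMultiset ℓ μ ∧
       (∀ i : Fin ℓ, ∀ p ∈ cells (lam i), (i : ℕ) ≤ (ofLex (T i p.1 p.2)).1)}

/-- A composition has no trailing zero parts. -/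
def NoTrailingZero (c : List ℕ) : Prop := ∀ h : c ≠ [], c.getLast h ≠ 0

/-- The set `BCM_ℓ(ν, μ)` of flagged `ℓ × ℓ` block composition matrices with row sum `ν`
and column sum `μ`: the entry at `(p,q,i,j)` is a composition (no trailing zeros) with at
most `min(p,q)` parts (`= min p q + 1` in 0-indexed form). -/
def BCM (ℓ : ℕ) (ν μ : Fin ℓ → List ℕ) : Set (Fin ℓ → Fin ℓ → ℕ → ℕ → List ℕ) :=
  {B | (∀ p q, {x : ℕ × ℕ | B p q x.1 x.2 ≠ []}.Finite) ∧
       (∀ p q i j, NoTrailingZero (B p q i j)) ∧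
       (∀ p q i j, (B p q i j).length ≤ min (p : ℕ) (q : ℕ) + 1) ∧
       (∀ s t, (∑ q, ∑ᶠ j, (B s q t j).sum) = (ν s).getD t 0) ∧
       (∀ s t, (∑ p, ∑ᶠ i, (B p s i t).sum) = (μ s).getD t 0)}

/-- The set `BW_ℓ(ν, μ)` of `(ν,μ)`-flagged biwords.  A biword over `S` is determined by
the multiset of its biletters (columns), so we encode it as a multiset of pairs
(top letter, bottom letter).  A letter `a_b` may appear in the `i`-th biword only if
`b ≥ i`; the top rows together form `U_ν` and the bottom rows form `U_μ`. -/
def BW (ℓ : ℕ) (ν μ : Fin ℓ → List ℕ) : Set (Fin ℓ → Multiset (Letter × Letter)) :=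
  {w | (∀ i : Fin ℓ, ∀ x ∈ w i, (i : ℕ) ≤ (ofLex x.1).1 ∧ (i : ℕ) ≤ (ofLex x.2).1) ∧
       (∑ i, (w i).map Prod.fst) = alphabetMultiset ℓ ν ∧
       (∑ i, (w i).map Prod.snd) = alphabetMultiset ℓ μ}

/-- The content multiset of a composition over the alphabet `ℕ` (0-indexed letters). -/
def natContent (c : List ℕ) : Multiset ℕ := contentMultiset c id

/-- Classical semistandard Young tableaux of shape `lam` and content `μ`,
with entries in `ℕ` (0-indexed letters). -/
def SSTclassical (lam μ : List ℕ) : Set (ℕ → ℕ → ℕ) :=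
  {T | IsSSYT lam 0 T ∧ entries lam T = natContent μ}

/-- Extend an `m × m` block ℕ-matrix to an `(m+1) × (m+1)` one by zero blocks. -/
def extendBlock (m : ℕ) (A : Fin m → Fin m → ((ℕ × ℕ) →₀ ℕ)) :
    Fin (m + 1) → Fin (m + 1) → ((ℕ × ℕ) →₀ ℕ) :=
  fun p q => if h : (p : ℕ) < m ∧ (q : ℕ) < m then A ⟨(p : ℕ), h.1⟩ ⟨(q : ℕ), h.2⟩ else 0

/-- Extend an `m × m` family of partitions by empty partitions. -/
def extendPart (m : ℕ) (P : Fin m → Fin m → ℕ → ℕ → List ℕ) :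
    Fin (m + 1) → Fin (m + 1) → ℕ → ℕ → List ℕ :=
  fun p q =>
    if h : (p : ℕ) < m ∧ (q : ℕ) < m then P ⟨(p : ℕ), h.1⟩ ⟨(q : ℕ), h.2⟩
    else fun _ _ => []

/-- Extend an `(m)`-multitableau by the empty tableau. -/
def extendTab (m : ℕ) (T : Fin m → ℕ → ℕ → Letter) : Fin (m + 1) → ℕ → ℕ → Letter :=
  fun i => if h : (i : ℕ) < m then T ⟨(i : ℕ), h⟩ else fun _ _ => toLex (0, 0)

/-- Extend an `m`-tuple of biwords by the empty biword. -/
def extendBW (m : ℕ) (w : Fin m → Multiset (Letter × Letter)) :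
    Fin (m + 1) → Multiset (Letter × Letter) :=
  fun i => if h : (i : ℕ) < m then w ⟨(i : ℕ), h⟩ else 0

namespace PB


def mkComp : ℕ → List ℕ → List ℕ
  | a, [] => if a = 0 then [] else [a]
  | a, x :: xs => (a - x) :: mkComp x xs

def mkPart (b : List ℕ) : List ℕ :=
  (List.range (b.length - 1)).map fun t => (b.drop (t + 1)).sum

lemma mkComp_sum {η : List ℕ} (hs : List.Pairwise (· ≥ ·) η) {a : ℕ}
    (hle : ∀ y ∈ η, y ≤ a) : (mkComp a η).sum = a := by
  induction η generalizing a with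
  | nil =>
    by_cases h : a = 0 <;> simp [mkComp, h]
  | cons x xs ih =>
    rw [List.pairwise_cons] at hs
    have hx : x ≤ a := hle x (by simp)
    simp only [mkComp, List.sum_cons, ih hs.2 (fun y hy => hs.1 y hy)]
    omega

lemma mkComp_drop_sum {η : List ℕ} (hs : List.Pairwise (· ≥ ·) η) (a t : ℕ) :
    ((mkComp a η).drop (t + 1)).sum = η.getD t 0 := by
  induction η generalizing a t with
  | nil =>
    by_cases h : a = 0 <;> simp [mkComp, h, List.drop_succ_cons]
  | cons x xs ih =>
    rw [List.pairwise_cons] at hs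
    cases t with
    | zero =>
      simp [mkComp, mkComp_sum hs.2 (fun y hy => hs.1 y hy)]
    | succ t =>
      simpa [mkComp] using ih hs.2 x t

lemma mkComp_ne_nil {a : ℕ} (ha : a ≠ 0) (η : List ℕ) : mkComp a η ≠ [] := by
  cases η <;> simp [mkComp, ha]

lemma mkComp_eq_nil {η : List ℕ} (hpos : ∀ y ∈ η, 0 < y) (hle : ∀ y ∈ η, y ≤ 0) :
    mkComp 0 η = [] := by
  cases η with
  | nil => simp [mkComp]
  | cons x xs => exact absurd (hle x (by simp)) (by have := hpos x (by simp); omega)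

lemma mkComp_ntz {η : List ℕ} (hpos : ∀ y ∈ η, 0 < y) (a : ℕ) :
    NoTrailingZero (mkComp a η) := by
  induction η generalizing a with
  | nil =>
    by_cases h : a = 0 <;> intro hne <;> simp [mkComp, h] at hne ⊢
  | cons x xs ih =>
    intro hne
    have hx : x ≠ 0 := (hpos x (by simp)).ne'
    have htl : mkComp x xs ≠ [] := by
      cases xs <;> simp [mkComp, hx]
    show ((a - x) :: mkComp x xs).getLast hne ≠ 0
    rw [List.getLast_cons htl]
    exact ih (fun y hy => hpos y (List.mem_cons_of_mem _ hy)) x htl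

lemma mkComp_length (a : ℕ) (η : List ℕ) : (mkComp a η).length ≤ η.length + 1 := by
  induction η generalizing a with
  | nil => by_cases h : a = 0 <;> simp [mkComp, h]
  | cons x xs ih => simpa [mkComp] using ih x

lemma drop_sum_le (b : List ℕ) {s t : ℕ} (h : s ≤ t) :
    (b.drop t).sum ≤ (b.drop s).sum := by
  have : b.drop t = (b.drop s).drop (t - s) := by
    rw [List.drop_drop]; congr 1; omega
  rw [this]
  calc ((b.drop s).drop (t - s)).sum
      ≤ ((b.drop s).take (t - s)).sum + ((b.drop s).drop (t - s)).sum := Nat.le_add_left _ _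
    _ = (b.drop s).sum := List.sum_take_add_sum_drop _ _

lemma mkPart_getD (b : List ℕ) (t : ℕ) :
    (mkPart b).getD t 0 = (b.drop (t + 1)).sum := by
  by_cases h : t < b.length - 1
  · rw [List.getD_eq_getElem _ _ (by simpa [mkPart] using h)]
    simp [mkPart]
  · rw [List.getD_eq_default _ _ (by simpa [mkPart] using h)]
    rw [List.drop_eq_nil_of_le (by omega)]
    rfl

lemma ntz_sum_pos {b : List ℕ} (hb : NoTrailingZero b) (hne : b ≠ []) : 0 < b.sum := by
  rcases Nat.eq_zero_or_pos b.sum with h | h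
  · exact absurd (List.sum_eq_zero_iff.mp h _ (List.getLast_mem hne)) (hb hne)
  · exact h

lemma ntz_drop {b : List ℕ} (hb : NoTrailingZero b) (k : ℕ) :
    NoTrailingZero (b.drop k) := by
  intro hne
  have hk : k < b.length := by
    by_contra h
    exact hne (List.drop_eq_nil_of_le (by omega))
  have : (b.drop k).getLast hne = b.getLast (by rintro rfl; simp at hk) := by
    rw [List.getLast_eq_getElem, List.getLast_eq_getElem]
    simp only [List.getElem_drop]
    congr 1
    simp [List.length_drop]
    omega
  rw [this]
  exact hb _

lemma mkPart_pos {b : List ℕ} (hb : NoTrailingZero b) :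
    ∀ x ∈ mkPart b, 0 < x := by
  intro x hx
  simp only [mkPart, List.mem_map, List.mem_range] at hx
  obtain ⟨t, ht, rfl⟩ := hx
  refine ntz_sum_pos (ntz_drop hb (t + 1)) ?_
  simp only [ne_eq, List.drop_eq_nil_iff]
  omega

lemma mkPart_sorted (b : List ℕ) : List.Pairwise (· ≥ ·) (mkPart b) := by
  unfold mkPart
  rw [List.pairwise_map]
  exact (List.pairwise_lt_range (n := b.length - 1)).imp fun h => drop_sum_le b (by omega)

lemma mkPart_le {b : List ℕ} : ∀ x ∈ mkPart b, x ≤ b.sum := by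
  intro x hx
  simp only [mkPart, List.mem_map, List.mem_range] at hx
  obtain ⟨t, ht, rfl⟩ := hx
  simpa using drop_sum_le b (Nat.zero_le (t + 1))

lemma mkPart_length (b : List ℕ) : (mkPart b).length = b.length - 1 := by
  simp [mkPart]

lemma getD_ext {l m : List ℕ} (hl : ∀ x ∈ l, 0 < x) (hm : ∀ x ∈ m, 0 < x)
    (h : ∀ t, l.getD t 0 = m.getD t 0) : l = m := by
  induction l generalizing m with
  | nil =>
    cases m with
    | nil => rfl
    | cons y ys =>
      have := h 0
      simp at this
      exact absurd this.symm (by simpa using (hm y (by simp)).ne')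
  | cons x xs ih =>
    cases m with
    | nil =>
      have := h 0
      simp at this
      exact absurd this (by simpa using (hl x (by simp)).ne')
    | cons y ys =>
      have h0 := h 0
      simp at h0
      rw [h0, ih (fun z hz => hl z (List.mem_cons_of_mem _ hz))
        (fun z hz => hm z (List.mem_cons_of_mem _ hz))
        (fun t => by simpa using h (t + 1))]

lemma suffix_sum_ext {b c : List ℕ} (hb : NoTrailingZero b) (hc : NoTrailingZero c)
    (h : ∀ t, (b.drop t).sum = (c.drop t).sum) : b = c := by
  induction b generalizing c with
  | nil =>
    cases c with
    | nil => rfl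
    | cons y ys =>
      have := h 0
      simp at this
      exact absurd this.symm (ntz_sum_pos hc (by simp)).ne'
  | cons x xs ih =>
    cases c with
    | nil =>
      have h0 := h 0
      have := ntz_sum_pos (b := x :: xs) hb (by simp)
      simp only [List.drop_zero] at h0
      rw [h0] at this
      simp at this
    | cons y ys =>
      have hxs : NoTrailingZero xs := by
        have := ntz_drop hb 1; simpa using this
      have hys : NoTrailingZero ys := by
        have := ntz_drop hc 1; simpa using this
      have he : xs = ys := ih hxs hys (fun t => by simpa using h (t + 1))
      subst he
      have h0 := h 0
      simp at h0
      rw [h0]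

lemma mkPart_mkComp {η : List ℕ} (hs : List.Pairwise (· ≥ ·) η) (hpos : ∀ y ∈ η, 0 < y)
    (a : ℕ) : mkPart (mkComp a η) = η := by
  refine getD_ext (mkPart_pos (mkComp_ntz hpos a)) hpos fun t => ?_
  rw [mkPart_getD, mkComp_drop_sum hs]

lemma mkComp_mkPart {b : List ℕ} (hb : NoTrailingZero b) :
    mkComp b.sum (mkPart b) = b := by
  refine suffix_sum_ext (mkComp_ntz (mkPart_pos hb) _) hb fun t => ?_
  cases t with
  | zero => simpa using mkComp_sum (mkPart_sorted b) mkPart_le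
  | succ t => rw [mkComp_drop_sum (mkPart_sorted b), mkPart_getD]



lemma finsum_row (M : (ℕ × ℕ) →₀ ℕ) (t : ℕ) : ∑ᶠ j, M (t, j) = rowSum M t := by
  classical
  set s : Finset (ℕ × ℕ) := M.support.filter (fun p => p.1 = t) with hs
  have hsub : (Function.support fun j => M (t, j)) ⊆ ↑(s.image Prod.snd) := by
    intro j hj
    simp only [Function.mem_support, ne_eq] at hj
    simp only [Finset.coe_image, Set.mem_image, Finset.mem_coe, hs, Finset.mem_filter]
    exact ⟨(t, j), ⟨Finsupp.mem_support_iff.mpr hj, rfl⟩, rfl⟩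
  rw [finsum_eq_sum_of_support_subset _ hsub]
  have hinj : ∀ x ∈ s, ∀ y ∈ s, Prod.snd x = Prod.snd y → x = y := by
    rintro ⟨a, b⟩ ha ⟨c, d⟩ hc h
    simp only [hs, Finset.mem_filter] at ha hc
    simp_all
  rw [Finset.sum_image hinj, rowSum, ← Finset.sum_filter, ← hs]
  refine Finset.sum_congr rfl ?_
  rintro ⟨a, b⟩ hab
  simp only [hs, Finset.mem_filter] at hab
  rw [← hab.2]

lemma finsum_col (M : (ℕ × ℕ) →₀ ℕ) (t : ℕ) : ∑ᶠ i, M (i, t) = colSum M t := by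
  classical
  set s : Finset (ℕ × ℕ) := M.support.filter (fun p => p.2 = t) with hs
  have hsub : (Function.support fun i => M (i, t)) ⊆ ↑(s.image Prod.fst) := by
    intro i hi
    simp only [Function.mem_support, ne_eq] at hi
    simp only [Finset.coe_image, Set.mem_image, Finset.mem_coe, hs, Finset.mem_filter]
    exact ⟨(i, t), ⟨Finsupp.mem_support_iff.mpr hi, rfl⟩, rfl⟩
  rw [finsum_eq_sum_of_support_subset _ hsub]
  have hinj : ∀ x ∈ s, ∀ y ∈ s, Prod.fst x = Prod.fst y → x = y := by
    rintro ⟨a, b⟩ ha ⟨c, d⟩ hc h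
    simp only [hs, Finset.mem_filter] at ha hc
    simp_all
  rw [Finset.sum_image hinj, colSum, ← Finset.sum_filter, ← hs]
  refine Finset.sum_congr rfl ?_
  rintro ⟨a, b⟩ hab
  simp only [hs, Finset.mem_filter] at hab
  rw [← hab.2]


section Main

variable {ℓ : ℕ} {ν μ : Fin ℓ → List ℕ}

lemma fwd_mem (AP : (Fin ℓ → Fin ℓ → ((ℕ × ℕ) →₀ ℕ)) × (Fin ℓ → Fin ℓ → ℕ → ℕ → List ℕ))
    (h : AP ∈ ParMat ℓ ν μ) :
    (fun p q i j => mkComp (AP.1 p q (i, j)) (AP.2 p q i j)) ∈ BCM ℓ ν μ := by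
  obtain ⟨h1, h2, h3, h4, h5⟩ := h
  refine ⟨?_, ?_, ?_, ?_, ?_⟩
  · intro p q
    refine ((AP.1 p q).support.finite_toSet).subset ?_
    rintro ⟨i, j⟩ hx
    simp only [Set.mem_setOf_eq] at hx
    simp only [Finset.mem_coe, Finsupp.mem_support_iff]
    intro h0
    apply hx
    rw [h0]
    refine mkComp_eq_nil (h3 p q i j).2 fun y hy => ?_
    have := h4 p q i j y hy
    omega
  · intro p q i j
    exact mkComp_ntz (h3 p q i j).2 _
  · intro p q i j
    show (mkComp (AP.1 p q (i, j)) (AP.2 p q i j)).length ≤ min (p : ℕ) (q : ℕ) + 1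
    have := h5 p q i j
    have := mkComp_length (AP.1 p q (i, j)) (AP.2 p q i j)
    omega
  · intro s t
    rw [← h1 s t]
    refine Finset.sum_congr rfl fun q _ => ?_
    rw [← finsum_row]
    exact finsum_congr fun j =>
      mkComp_sum (h3 s q t j).1 (fun y hy => h4 s q t j y hy)
  · intro s t
    rw [← h2 s t]
    refine Finset.sum_congr rfl fun p _ => ?_
    rw [← finsum_col]
    exact finsum_congr fun i =>
      mkComp_sum (h3 p s i t).1 (fun y hy => h4 p s i t y hy)

noncomputable def bwdA (B : Fin ℓ → Fin ℓ → ℕ → ℕ → List ℕ)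
    (hfin : ∀ p q, {x : ℕ × ℕ | B p q x.1 x.2 ≠ []}.Finite) :
    Fin ℓ → Fin ℓ → ((ℕ × ℕ) →₀ ℕ) :=
  fun p q => Finsupp.ofSupportFinite (fun x => (B p q x.1 x.2).sum)
    ((hfin p q).subset (by
      intro x hx
      simp only [Function.mem_support, ne_eq] at hx
      simp only [Set.mem_setOf_eq]
      intro hnil
      exact hx (by rw [hnil]; rfl)))

lemma bwdA_apply (B : Fin ℓ → Fin ℓ → ℕ → ℕ → List ℕ)
    (hfin : ∀ p q, {x : ℕ × ℕ | B p q x.1 x.2 ≠ []}.Finite)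
    (p q : Fin ℓ) (x : ℕ × ℕ) : bwdA B hfin p q x = (B p q x.1 x.2).sum := by
  simp [bwdA, Finsupp.ofSupportFinite]
  rfl

lemma bwd_mem (B : Fin ℓ → Fin ℓ → ℕ → ℕ → List ℕ) (h : B ∈ BCM ℓ ν μ) :
    (bwdA B h.1, fun p q i j => mkPart (B p q i j)) ∈ ParMat ℓ ν μ := by
  refine ⟨?_, ?_, ?_, ?_, ?_⟩
  · intro s t
    rw [← h.2.2.2.1 s t]
    refine Finset.sum_congr rfl fun q _ => ?_
    rw [← finsum_row]
    exact finsum_congr fun j => bwdA_apply B h.1 s q (t, j)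
  · intro s t
    rw [← h.2.2.2.2 s t]
    refine Finset.sum_congr rfl fun p _ => ?_
    rw [← finsum_col]
    exact finsum_congr fun i => bwdA_apply B h.1 p s (i, t)
  · intro p q i j
    exact ⟨mkPart_sorted _, mkPart_pos (h.2.1 p q i j)⟩
  · intro p q i j x hx
    rw [bwdA_apply]
    exact mkPart_le x hx
  · intro p q i j
    rw [mkPart_length]
    have := h.2.2.1 p q i j
    omega

end Main

end PB

/-- `ParMat♭_{ν,μ}` is in bijection with `BCM_ℓ(ν,μ)`, where `(A,P)`
corresponds to `B` with `|b^{(pq)}_{ij}| = a^{(pq)}_{ij}`, and each part of the partition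
`η^{(pq)}_{ij}` is the sum of the later parts of the composition `b^{(pq)}_{ij}`
(the `t`-th part of `η` is the sum of the parts of `b` in positions `> t`). -/
theorem parmat_equiv_bcm (ℓ n : ℕ) (hℓ : 1 ≤ ℓ) (ν μ : Fin ℓ → List ℕ)
    (hν : IsMultiComp ℓ n ν) (hμ : IsMultiComp ℓ n μ) :
    ∃ e : ↥(ParMat ℓ ν μ) ≃ ↥(BCM ℓ ν μ),
      ∀ AP : ↥(ParMat ℓ ν μ), ∀ (p q : Fin ℓ) (i j : ℕ),
        ((e AP).1 p q i j).sum = AP.1.1 p q (i, j) ∧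
        ∀ t : ℕ, (AP.1.2 p q i j).getD t 0 = (((e AP).1 p q i j).drop (t + 1)).sum := by
  classical
  refine ⟨⟨fun AP => ⟨fun p q i j => PB.mkComp (AP.1.1 p q (i, j)) (AP.1.2 p q i j),
      PB.fwd_mem _ AP.2⟩,
    fun B => ⟨(PB.bwdA B.1 B.2.1, fun p q i j => PB.mkPart (B.1 p q i j)),
      PB.bwd_mem _ B.2⟩, ?_, ?_⟩, ?_⟩
  · rintro ⟨⟨A, P⟩, hAP⟩
    obtain ⟨h1, h2, h3, h4, h5⟩ := hAP
    apply Subtype.ext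
    refine Prod.ext ?_ ?_
    · funext p q
      refine Finsupp.ext fun x => ?_
      rw [PB.bwdA_apply]
      simpa using PB.mkComp_sum (h3 p q x.1 x.2).1 (fun y hy => h4 p q x.1 x.2 y hy)
    · funext p q i j
      exact PB.mkPart_mkComp (h3 p q i j).1 (h3 p q i j).2 _
  · rintro ⟨B, hB⟩
    apply Subtype.ext
    funext p q i j
    show PB.mkComp (PB.bwdA B hB.1 p q (i, j)) (PB.mkPart (B p q i j)) = B p q i j
    rw [PB.bwdA_apply]
    exact PB.mkComp_mkPart (hB.2.1 p q i j)
  · rintro ⟨⟨A, P⟩, hAP⟩ p q i j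
    obtain ⟨h1, h2, h3, h4, h5⟩ := hAP
    constructor
    · exact PB.mkComp_sum (h3 p q i j).1 (fun y hy => h4 p q i j y hy)
    · intro t
      exact (PB.mkComp_drop_sum (h3 p q i j).1 _ t).symm
end

section
/- Fix ℓ ≥ 1 and ℓ-multicompositions ν and μ of n. There is a bijection between the set BCM_ℓ(ν,μ) of flagged ℓ×ℓ block composition matrices with row sum ν and column sum μ and the set BW_ℓ(ν,μ) of (ν,μ)-flagged biwords, under which B corresponds to the tuple w = (w^{(1)},…,w^{(ℓ)}) in which, for all p,q,i,j and all 1 ≤ t ≤ ℓ, the biletter with top letter i_p and bottom letter j_q occurs in w^{(t)} with multiplicity equal to the t-th part of the composition b^{(pq)}_{ij} (interpreted as 0 if t exceeds its length). -/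
namespace BcmBwAux
open Multiset Finset

def trimZ : List ℕ → List ℕ
  | [] => []
  | a :: l => if a = 0 ∧ trimZ l = [] then [] else a :: trimZ l
lemma trimZ_getD (l : List ℕ) (t : ℕ) : (trimZ l).getD t 0 = l.getD t 0 := by
  induction l generalizing t with
  | nil => rfl
  | cons a l ih =>
    rw [trimZ]
    split
    next h =>
      obtain ⟨rfl, h2⟩ := h
      cases t with
      | zero => simp
      | succ t => simp only [List.getD_cons_succ, ← ih t, h2]; rfl
    next h =>
      cases t with
      | zero => rfl
      | succ t => rw [List.getD_cons_succ, List.getD_cons_succ, ih]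

lemma trimZ_ntz (l : List ℕ) : NoTrailingZero (trimZ l) := by
  induction l with
  | nil => intro h; exact absurd rfl h
  | cons a l ih =>
    rw [trimZ]
    split
    next h => intro h'; exact absurd rfl h'
    next h =>
      intro h'
      by_cases hl : trimZ l = []
      · have : (a :: trimZ l).getLast h' = a := by
          rw [List.getLast_eq_getElem]
          simp [hl]
        rw [this]
        exact fun ha => h ⟨ha, hl⟩
      · rw [List.getLast_cons hl]
        exact ih hl

lemma trimZ_length (l : List ℕ) : (trimZ l).length ≤ l.length := by
  induction l with
  | nil => simp [trimZ]
  | cons a l ih =>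
    rw [trimZ]
    split
    · simp
    · simpa using ih

lemma ntz_getD_last (l : List ℕ) (h : NoTrailingZero l) (hne : l ≠ []) :
    l.getD (l.length - 1) 0 ≠ 0 := by
  have hp : l.length - 1 < l.length := by
    have := List.length_pos_iff.mpr hne; omega
  rw [List.getD_eq_getElem l 0 hp, ← List.getLast_eq_getElem hne]
  exact h hne

lemma ntz_ext (l l' : List ℕ) (h : NoTrailingZero l) (h' : NoTrailingZero l')
    (hg : ∀ t, l.getD t 0 = l'.getD t 0) : l = l' := by
  have hlen : l.length = l'.length := by
    rcases Nat.lt_trichotomy l.length l'.length with hl | hl | hl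
    · exfalso
      have hne : l' ≠ [] := by
        intro he; rw [he] at hl; simp at hl
      have := ntz_getD_last l' h' hne
      rw [← hg] at this
      exact this (List.getD_eq_default _ _ (by omega))
    · exact hl
    · exfalso
      have hne : l ≠ [] := by
        intro he; rw [he] at hl; simp at hl
      have := ntz_getD_last l h hne
      rw [hg] at this
      exact this (List.getD_eq_default _ _ (by omega))
  apply List.ext_getElem hlen
  intro i h1 h2
  have := hg i
  rwa [List.getD_eq_getElem l 0 h1, List.getD_eq_getElem l' 0 h2] at this

lemma sum_eq_range (l : List ℕ) (n : ℕ) (h : l.length ≤ n) :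
    l.sum = ∑ t ∈ Finset.range n, l.getD t 0 := by
  induction l generalizing n with
  | nil => simp
  | cons a l ih =>
    cases n with
    | zero => simp at h
    | succ m =>
      rw [Finset.sum_range_succ']
      simp only [List.getD_cons_succ, List.getD_cons_zero, List.sum_cons]
      rw [← ih m (by simpa using h)]
      omega

lemma trimZ_sum (l : List ℕ) : (trimZ l).sum = l.sum := by
  rw [sum_eq_range _ l.length (trimZ_length l), sum_eq_range l l.length le_rfl]
  exact Finset.sum_congr rfl fun t _ => trimZ_getD l t

lemma trimZ_ne_nil (l : List ℕ) (h : trimZ l ≠ []) : ∃ t, l.getD t 0 ≠ 0 :=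
  ⟨(trimZ l).length - 1, by rw [← trimZ_getD]; exact ntz_getD_last _ (trimZ_ntz l) h⟩

variable {ℓ : ℕ}

noncomputable def Fmap (B : Fin ℓ → Fin ℓ → ℕ → ℕ → List ℕ)
    (hB : ∀ p q, {x : ℕ × ℕ | B p q x.1 x.2 ≠ []}.Finite) (t : Fin ℓ) :
    Multiset (Letter × Letter) :=
  ∑ p : Fin ℓ, ∑ q : Fin ℓ,
    (hB p q).toFinset.val.bind fun x =>
      Multiset.replicate ((B p q x.1 x.2).getD (t : ℕ) 0)
        (toLex ((p : ℕ), x.1), toLex ((q : ℕ), x.2))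

lemma count_Fmap (B : Fin ℓ → Fin ℓ → ℕ → ℕ → List ℕ)
    (hB : ∀ p q, {x : ℕ × ℕ | B p q x.1 x.2 ≠ []}.Finite) (t : Fin ℓ) (b a d c : ℕ) :
    Multiset.count (toLex (b, a), toLex (d, c)) (Fmap B hB t) =
      if h : b < ℓ ∧ d < ℓ then (B ⟨b, h.1⟩ ⟨d, h.2⟩ a c).getD (t : ℕ) 0 else 0 := by
  classical
  rw [Fmap, Multiset.count_sum']
  simp only [Multiset.count_sum', Multiset.count_bind]
  have key : ∀ p q : Fin ℓ,
      (Multiset.map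
        (fun x : ℕ × ℕ => Multiset.count (toLex (b, a), toLex (d, c))
          (Multiset.replicate ((B p q x.1 x.2).getD (t : ℕ) 0)
            (toLex ((p : ℕ), x.1), toLex ((q : ℕ), x.2)))) (hB p q).toFinset.val).sum =
      if (p : ℕ) = b ∧ (q : ℕ) = d then (B p q a c).getD (t : ℕ) 0 else 0 := by
    intro p q
    have : ∀ x : ℕ × ℕ,
        Multiset.count (toLex (b, a), toLex (d, c))
          (Multiset.replicate ((B p q x.1 x.2).getD (t : ℕ) 0)
            (toLex ((p : ℕ), x.1), toLex ((q : ℕ), x.2))) =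
        if (p : ℕ) = b ∧ (q : ℕ) = d then
          (if x = (a, c) then (B p q x.1 x.2).getD (t : ℕ) 0 else 0) else 0 := by
      intro x
      rw [Multiset.count_replicate]
      by_cases h1 : (toLex ((p : ℕ), x.1), toLex ((q : ℕ), x.2)) =
          (toLex (b, a), toLex (d, c))
      · rw [if_pos h1]
        rw [Prod.ext_iff] at h1
        simp only [toLex_inj, Prod.mk.injEq] at h1
        obtain ⟨⟨h2, h3⟩, h4, h5⟩ := h1
        rw [if_pos ⟨h2, h4⟩, if_pos (by ext <;> simp [← h3, ← h5])]
      · rw [if_neg h1]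
        by_cases h2 : (p : ℕ) = b ∧ (q : ℕ) = d
        · rw [if_pos h2]
          by_cases h3 : x = (a, c)
          · exfalso; apply h1; subst h3; simp [Prod.ext_iff, h2.1, h2.2]
          · rw [if_neg h3]
        · rw [if_neg h2]
    calc (Multiset.map _ (hB p q).toFinset.val).sum
        = ∑ x ∈ (hB p q).toFinset,
            (if (p : ℕ) = b ∧ (q : ℕ) = d then
              (if x = (a, c) then (B p q x.1 x.2).getD (t : ℕ) 0 else 0) else 0) := by
          rw [Finset.sum]
          congr 1
          exact Multiset.map_congr rfl fun x _ => this x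
      _ = if (p : ℕ) = b ∧ (q : ℕ) = d then (B p q a c).getD (t : ℕ) 0 else 0 := by
          split
          · rw [Finset.sum_ite_eq' (hB p q).toFinset (a, c)
              (fun x => (B p q x.1 x.2).getD (t : ℕ) 0)]
            split
            · rfl
            · next hmem =>
              rw [List.getD_eq_default]
              have : ¬ B p q a c ≠ [] := fun hc => hmem ((hB p q).mem_toFinset.mpr hc)
              push_neg at this
              simp [this]
          · exact Finset.sum_const_zero
  simp only [key]
  by_cases h : b < ℓ ∧ d < ℓ
  · rw [dif_pos h]
    rw [Finset.sum_comm]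
    rw [Finset.sum_eq_single ⟨d, h.2⟩ (fun q _ hq => by
      rw [Finset.sum_eq_zero]
      intro p _
      rw [if_neg]
      rintro ⟨-, h2⟩
      exact hq (Fin.ext h2)) (by simp)]
    rw [Finset.sum_eq_single ⟨b, h.1⟩ (fun p _ hp => by
      rw [if_neg]
      rintro ⟨h1, -⟩
      exact hp (Fin.ext h1)) (by simp)]
    simp
  · rw [dif_neg h]
    apply Finset.sum_eq_zero
    intro p _
    apply Finset.sum_eq_zero
    intro q _
    rw [if_neg]
    rintro ⟨h1, h2⟩
    exact h ⟨h1 ▸ p.2, h2 ▸ q.2⟩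

lemma count_fst {α β : Type*} [DecidableEq α] [DecidableEq β] (m : Multiset (α × β))
    (s : Finset β) (h : ∀ x ∈ m, x.2 ∈ s) (a : α) :
    Multiset.count a (m.map Prod.fst) = ∑ y ∈ s, Multiset.count (a, y) m := by
  induction m using Multiset.induction with
  | empty => simp
  | cons x m ih =>
    have hm : ∀ z ∈ m, z.2 ∈ s := fun z hz => h z (Multiset.mem_cons_of_mem hz)
    simp only [Multiset.map_cons, Multiset.count_cons, ih hm]
    rw [Finset.sum_add_distrib]
    congr 1
    have : ∀ y : β, (if (a, y) = x then 1 else 0) =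
        if y = x.2 then (if a = x.1 then 1 else 0) else 0 := by
      intro y
      by_cases h1 : (a, y) = x
      · have h2 : a = x.1 := by rw [← h1]
        have h3 : y = x.2 := by rw [← h1]
        rw [if_pos h1, if_pos h3, if_pos h2]
      · rw [if_neg h1]
        by_cases h2 : y = x.2
        · subst h2
          rw [if_pos rfl, if_neg fun h3 => h1 (Prod.ext h3 rfl)]
        · rw [if_neg h2]
    simp only [this]
    rw [Finset.sum_ite_eq' s x.2 (fun _ => if a = x.1 then 1 else 0),
      if_pos (h x (Multiset.mem_cons_self x m))]

lemma count_snd {α β : Type*} [DecidableEq α] [DecidableEq β] (m : Multiset (α × β))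
    (s : Finset α) (h : ∀ x ∈ m, x.1 ∈ s) (b : β) :
    Multiset.count b (m.map Prod.snd) = ∑ y ∈ s, Multiset.count (y, b) m := by
  induction m using Multiset.induction with
  | empty => simp
  | cons x m ih =>
    have hm : ∀ z ∈ m, z.1 ∈ s := fun z hz => h z (Multiset.mem_cons_of_mem hz)
    simp only [Multiset.map_cons, Multiset.count_cons, ih hm]
    rw [Finset.sum_add_distrib]
    congr 1
    have : ∀ y : α, (if (y, b) = x then 1 else 0) =
        if y = x.1 then (if b = x.2 then 1 else 0) else 0 := by
      intro y
      by_cases h1 : (y, b) = x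
      · have h2 : y = x.1 := by rw [← h1]
        have h3 : b = x.2 := by rw [← h1]
        rw [if_pos h1, if_pos h2, if_pos h3]
      · rw [if_neg h1]
        by_cases h2 : y = x.1
        · subst h2
          rw [if_pos rfl, if_neg fun h3 => h1 (Prod.ext rfl h3)]
        · rw [if_neg h2]
    simp only [this]
    rw [Finset.sum_ite_eq' s x.1 (fun _ => if b = x.2 then 1 else 0),
      if_pos (h x (Multiset.mem_cons_self x m))]

lemma count_content (c : List ℕ) (b s a : ℕ) :
    Multiset.count (toLex (s, a)) (contentMultiset c (fun a' => toLex (b, a'))) =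
      if b = s then c.getD a 0 else 0 := by
  classical
  rw [contentMultiset, Multiset.count_bind]
  have : (Multiset.range c.length).map
      (fun a' => Multiset.count (toLex (s, a))
        (Multiset.replicate (c.getD a' 0) (toLex (b, a')))) =
      (Multiset.range c.length).map
      (fun a' => if b = s then (if a' = a then c.getD a' 0 else 0) else 0) := by
    apply Multiset.map_congr rfl
    intro a' _
    rw [Multiset.count_replicate]
    by_cases h1 : (toLex (b, a') : Letter) = toLex (s, a)
    · rw [toLex_inj, Prod.mk.injEq] at h1
      simp [h1.1, h1.2]
    · rw [if_neg h1]
      by_cases h2 : b = s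
      · subst h2
        rw [if_pos rfl, if_neg]
        intro h3
        exact h1 (by rw [h3])
      · rw [if_neg h2]
  rw [this]
  have hr : ((Multiset.range c.length).map
      (fun a' => if b = s then (if a' = a then c.getD a' 0 else 0) else 0)).sum =
      ∑ a' ∈ Finset.range c.length,
        (if b = s then (if a' = a then c.getD a' 0 else 0) else 0) := rfl
  rw [hr]
  split
  · rw [Finset.sum_ite_eq' (Finset.range c.length) a (fun a' => c.getD a' 0)]
    split
    · rfl
    · next hmem =>
      rw [List.getD_eq_default]
      simpa using hmem
  · exact Finset.sum_const_zero

lemma count_alphabet (ℓ : ℕ) (μ : Fin ℓ → List ℕ) (s a : ℕ) :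
    Multiset.count (toLex (s, a)) (alphabetMultiset ℓ μ) =
      if h : s < ℓ then (μ ⟨s, h⟩).getD a 0 else 0 := by
  classical
  rw [alphabetMultiset, Multiset.count_sum']
  simp only [count_content]
  by_cases h : s < ℓ
  · rw [dif_pos h]
    rw [Finset.sum_eq_single ⟨s, h⟩ (fun b _ hb => by
      rw [if_neg fun h1 => hb (Fin.ext h1)]) (by simp)]
    simp
  · rw [dif_neg h]
    apply Finset.sum_eq_zero
    intro b _
    rw [if_neg]
    intro h1
    subst h1
    exact h b.2

lemma mem_alphabet {ℓ : ℕ} {μ : Fin ℓ → List ℕ} {y : Letter}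
    (h : y ∈ alphabetMultiset ℓ μ) : (ofLex y).1 < ℓ := by
  rw [alphabetMultiset] at h
  obtain ⟨b, -, hb⟩ := Multiset.mem_sum.mp h
  rw [contentMultiset] at hb
  obtain ⟨a, -, ha⟩ := Multiset.mem_bind.mp hb
  have := Multiset.eq_of_mem_replicate ha
  subst this
  exact b.2

def Gmap (w : Fin ℓ → Multiset (Letter × Letter)) (p q : Fin ℓ) (i j : ℕ) : List ℕ :=
  trimZ (List.ofFn (fun t : Fin ℓ =>
    Multiset.count (toLex ((p : ℕ), i), toLex ((q : ℕ), j)) (w t)))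

lemma getD_Gmap (w : Fin ℓ → Multiset (Letter × Letter)) (p q : Fin ℓ) (i j t : ℕ) :
    (Gmap w p q i j).getD t 0 =
      if h : t < ℓ then
        Multiset.count (toLex ((p : ℕ), i), toLex ((q : ℕ), j)) (w ⟨t, h⟩) else 0 := by
  rw [Gmap, trimZ_getD]
  split
  · next h =>
    rw [List.getD_eq_getElem _ 0 (by simpa using h), List.getElem_ofFn]
  · next h =>
    exact List.getD_eq_default _ _ (by simpa using Nat.le_of_not_lt h)

lemma sum_Gmap (w : Fin ℓ → Multiset (Letter × Letter)) (p q : Fin ℓ) (i j : ℕ) :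
    (Gmap w p q i j).sum =
      ∑ t : Fin ℓ, Multiset.count (toLex ((p : ℕ), i), toLex ((q : ℕ), j)) (w t) := by
  rw [Gmap, trimZ_sum, List.sum_ofFn]

lemma getD_ne_zero_lt_length {l : List ℕ} {t : ℕ} (h : l.getD t 0 ≠ 0) : t < l.length := by
  by_contra hc
  exact h (List.getD_eq_default _ _ (Nat.le_of_not_lt hc))

lemma mem_Fmap {B : Fin ℓ → Fin ℓ → ℕ → ℕ → List ℕ}
    {hB : ∀ p q, {x : ℕ × ℕ | B p q x.1 x.2 ≠ []}.Finite} {t : Fin ℓ}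
    {x : Letter × Letter} (hx : x ∈ Fmap B hB t) :
    ∃ (p q : Fin ℓ) (i j : ℕ), x = (toLex ((p : ℕ), i), toLex ((q : ℕ), j)) ∧
      (B p q i j).getD (t : ℕ) 0 ≠ 0 := by
  rw [Fmap] at hx
  obtain ⟨p, -, hx⟩ := Multiset.mem_sum.mp hx
  obtain ⟨q, -, hx⟩ := Multiset.mem_sum.mp hx
  obtain ⟨e, -, hx⟩ := Multiset.mem_bind.mp hx
  obtain ⟨hne, rfl⟩ := Multiset.mem_replicate.mp hx
  exact ⟨p, q, e.1, e.2, rfl, hne⟩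

lemma Gmap_Fmap_eq {B : Fin ℓ → Fin ℓ → ℕ → ℕ → List ℕ}
    (hB : ∀ p q, {x : ℕ × ℕ | B p q x.1 x.2 ≠ []}.Finite)
    (hntz : ∀ p q i j, NoTrailingZero (B p q i j))
    (hlen : ∀ p q i j, (B p q i j).length ≤ min (p : ℕ) (q : ℕ) + 1) :
    Gmap (Fmap B hB) = B := by
  funext p q i j
  refine ntz_ext (Gmap (Fmap B hB) p q i j) (B p q i j) (trimZ_ntz _)
    (hntz p q i j) fun t => ?_
  rw [getD_Gmap]
  split
  · next h =>
    have := count_Fmap B hB ⟨t, h⟩ (p : ℕ) i (q : ℕ) j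
    rw [dif_pos ⟨p.2, q.2⟩] at this
    simpa using this
  · next h =>
    symm
    apply List.getD_eq_default
    have := hlen p q i j
    have hp := p.2
    omega

lemma fst_mem_alphabet_of_mem {ν μ : Fin ℓ → List ℕ}
    {w : Fin ℓ → Multiset (Letter × Letter)} (hw : w ∈ BW ℓ ν μ)
    {t : Fin ℓ} {x : Letter × Letter} (hx : x ∈ w t) :
    x.1 ∈ alphabetMultiset ℓ ν := by
  have h1 : x.1 ∈ (w t).map Prod.fst := Multiset.mem_map_of_mem _ hx
  have h2 : (w t).map Prod.fst ≤ ∑ i, (w i).map Prod.fst :=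
    Finset.single_le_sum (f := fun i => (w i).map Prod.fst)
      (fun i _ => Multiset.zero_le _) (Finset.mem_univ t)
  rw [hw.2.1] at h2
  exact Multiset.mem_of_le h2 h1

lemma snd_mem_alphabet_of_mem {ν μ : Fin ℓ → List ℕ}
    {w : Fin ℓ → Multiset (Letter × Letter)} (hw : w ∈ BW ℓ ν μ)
    {t : Fin ℓ} {x : Letter × Letter} (hx : x ∈ w t) :
    x.2 ∈ alphabetMultiset ℓ μ := by
  have h1 : x.2 ∈ (w t).map Prod.snd := Multiset.mem_map_of_mem _ hx
  have h2 : (w t).map Prod.snd ≤ ∑ i, (w i).map Prod.snd :=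
    Finset.single_le_sum (f := fun i => (w i).map Prod.snd)
      (fun i _ => Multiset.zero_le _) (Finset.mem_univ t)
  rw [hw.2.2] at h2
  exact Multiset.mem_of_le h2 h1

lemma Fmap_Gmap_eq {ν μ : Fin ℓ → List ℕ}
    {w : Fin ℓ → Multiset (Letter × Letter)} (hw : w ∈ BW ℓ ν μ)
    (hfin : ∀ p q, {x : ℕ × ℕ | Gmap w p q x.1 x.2 ≠ []}.Finite) (t : Fin ℓ) :
    Fmap (Gmap w) hfin t = w t := by
  ext x
  obtain ⟨x1, x2⟩ := x
  have hx1 : x1 = toLex ((ofLex x1).1, (ofLex x1).2) := rfl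
  have hx2 : x2 = toLex ((ofLex x2).1, (ofLex x2).2) := rfl
  rw [hx1, hx2, count_Fmap]
  split
  · next h =>
    rw [getD_Gmap, dif_pos t.2]
  · next h =>
    symm
    rw [Multiset.count_eq_zero]
    intro hmem
    apply h
    constructor
    · exact mem_alphabet (fst_mem_alphabet_of_mem hw hmem)
    · exact mem_alphabet (snd_mem_alphabet_of_mem hw hmem)

lemma Fmap_fst {ν μ : Fin ℓ → List ℕ} {B : Fin ℓ → Fin ℓ → ℕ → ℕ → List ℕ}
    (hB : B ∈ BCM ℓ ν μ) :
    ∑ t : Fin ℓ, (Fmap B hB.1 t).map Prod.fst = alphabetMultiset ℓ ν := by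
  classical
  set Jall : Finset ℕ := Finset.univ.biUnion (fun p : Fin ℓ =>
    Finset.univ.biUnion (fun q : Fin ℓ => (hB.1 p q).toFinset.image Prod.snd)) with hJ
  set s2 : Finset Letter := (Finset.univ ×ˢ Jall).image
    (fun x : Fin ℓ × ℕ => toLex ((x.1 : ℕ), x.2)) with hs2
  refine Multiset.ext.mpr fun y => ?_
  rw [Multiset.count_sum']
  have hvalid : ∀ t : Fin ℓ, ∀ x ∈ Fmap B hB.1 t, x.2 ∈ s2 := by
    intro t x hx
    obtain ⟨p, q, i, j, rfl, hne⟩ := mem_Fmap hx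
    have hBne : B p q i j ≠ [] := fun hc => hne (by rw [hc]; simp)
    apply Finset.mem_image.mpr
    refine ⟨(q, j), Finset.mem_product.mpr ⟨Finset.mem_univ q, ?_⟩, rfl⟩
    exact Finset.mem_biUnion.mpr ⟨p, Finset.mem_univ p,
      Finset.mem_biUnion.mpr ⟨q, Finset.mem_univ q,
        Finset.mem_image.mpr ⟨(i, j), (hB.1 p q).mem_toFinset.mpr hBne, rfl⟩⟩⟩
  have hcf : ∀ t : Fin ℓ, Multiset.count y ((Fmap B hB.1 t).map Prod.fst) =
      ∑ x ∈ Finset.univ ×ˢ Jall,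
        Multiset.count (toLex ((ofLex y).1, (ofLex y).2), toLex (((x.1 : Fin ℓ) : ℕ), x.2))
          (Fmap B hB.1 t) := by
    intro t
    rw [count_fst _ s2 (hvalid t) y, hs2, Finset.sum_image]
    · rfl
    · intro x _ x' _ he
      rw [toLex_inj, Prod.mk.injEq] at he
      exact Prod.ext (Fin.ext he.1) he.2
  simp only [hcf, count_Fmap]
  have hrhs := count_alphabet ℓ ν (ofLex y).1 (ofLex y).2
  by_cases hb : (ofLex y).1 < ℓ
  · rw [show Multiset.count y (alphabetMultiset ℓ ν) =
      Multiset.count (toLex ((ofLex y).1, (ofLex y).2)) (alphabetMultiset ℓ ν) from rfl,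
      hrhs, dif_pos hb]
    have hstep : ∀ (t : Fin ℓ) (x : Fin ℓ × ℕ),
        (if h : (ofLex y).1 < ℓ ∧ ((x.1 : Fin ℓ) : ℕ) < ℓ then
          (B ⟨(ofLex y).1, h.1⟩ ⟨((x.1 : Fin ℓ) : ℕ), h.2⟩ (ofLex y).2 x.2).getD (t : ℕ) 0
        else 0) = (B ⟨(ofLex y).1, hb⟩ x.1 (ofLex y).2 x.2).getD (t : ℕ) 0 := by
      intro t x
      rw [dif_pos ⟨hb, x.1.2⟩]
    simp only [hstep]
    rw [Finset.sum_comm]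
    have hsum : ∀ x : Fin ℓ × ℕ,
        ∑ t : Fin ℓ, (B ⟨(ofLex y).1, hb⟩ x.1 (ofLex y).2 x.2).getD (t : ℕ) 0 =
        (B ⟨(ofLex y).1, hb⟩ x.1 (ofLex y).2 x.2).sum := by
      intro x
      rw [sum_eq_range _ ℓ (by
        have := hB.2.2.1 ⟨(ofLex y).1, hb⟩ x.1 (ofLex y).2 x.2
        have := x.1.2
        omega)]
      exact Fin.sum_univ_eq_sum_range
        (fun t => (B ⟨(ofLex y).1, hb⟩ x.1 (ofLex y).2 x.2).getD t 0) ℓ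
    simp only [hsum]
    rw [Finset.sum_product]
    rw [← hB.2.2.2.1 ⟨(ofLex y).1, hb⟩ (ofLex y).2]
    refine Finset.sum_congr rfl fun q _ => ?_
    symm
    apply finsum_eq_sum_of_support_subset
    intro j hj
    rw [Function.mem_support] at hj
    have hBne : B ⟨(ofLex y).1, hb⟩ q (ofLex y).2 j ≠ [] := by
      intro hc
      rw [hc] at hj
      exact hj rfl
    exact Finset.mem_coe.mpr (Finset.mem_biUnion.mpr ⟨⟨(ofLex y).1, hb⟩,
      Finset.mem_univ _, Finset.mem_biUnion.mpr ⟨q, Finset.mem_univ _,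
        Finset.mem_image.mpr ⟨((ofLex y).2, j),
          (hB.1 _ _).mem_toFinset.mpr hBne, rfl⟩⟩⟩)
  · rw [show Multiset.count y (alphabetMultiset ℓ ν) =
      Multiset.count (toLex ((ofLex y).1, (ofLex y).2)) (alphabetMultiset ℓ ν) from rfl,
      hrhs, dif_neg hb]
    refine Finset.sum_eq_zero fun t _ => Finset.sum_eq_zero fun x _ => ?_
    rw [dif_neg fun hc => hb hc.1]

lemma BCM_transpose {ν μ : Fin ℓ → List ℕ} {B : Fin ℓ → Fin ℓ → ℕ → ℕ → List ℕ}
    (hB : B ∈ BCM ℓ ν μ) : (fun p q i j => B q p j i) ∈ BCM ℓ μ ν := by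
  refine ⟨?_, fun p q i j => hB.2.1 q p j i, ?_, hB.2.2.2.2, hB.2.2.2.1⟩
  · intro p q
    apply Set.Finite.subset ((hB.1 q p).image Prod.swap)
    rintro ⟨i, j⟩ h
    exact ⟨(j, i), h, rfl⟩
  · intro p q i j
    show (B q p j i).length ≤ min (p : ℕ) (q : ℕ) + 1
    have := hB.2.2.1 q p j i
    omega

lemma count_map_swap {α β : Type*} [DecidableEq α] [DecidableEq β]
    (m : Multiset (α × β)) (u : β) (v : α) :
    Multiset.count (u, v) (m.map Prod.swap) = Multiset.count (v, u) m := by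
  have := Multiset.count_map_eq_count' Prod.swap m Prod.swap_injective (v, u)
  simpa using this

lemma Fmap_map_swap {B : Fin ℓ → Fin ℓ → ℕ → ℕ → List ℕ}
    (hB : ∀ p q, {x : ℕ × ℕ | B p q x.1 x.2 ≠ []}.Finite)
    (hB' : ∀ p q, {x : ℕ × ℕ | B q p x.2 x.1 ≠ []}.Finite) (t : Fin ℓ) :
    (Fmap B hB t).map Prod.swap = Fmap (fun p q i j => B q p j i) hB' t := by
  ext x
  obtain ⟨x1, x2⟩ := x
  rw [count_map_swap]
  have h1 := count_Fmap B hB t (ofLex x2).1 (ofLex x2).2 (ofLex x1).1 (ofLex x1).2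
  have h2 := count_Fmap (fun p q i j => B q p j i) hB' t
    (ofLex x1).1 (ofLex x1).2 (ofLex x2).1 (ofLex x2).2
  rw [show (x2, x1) = (toLex ((ofLex x2).1, (ofLex x2).2),
    toLex ((ofLex x1).1, (ofLex x1).2)) from rfl, h1]
  rw [show (x1, x2) = (toLex ((ofLex x1).1, (ofLex x1).2),
    toLex ((ofLex x2).1, (ofLex x2).2)) from rfl, h2]
  by_cases h : (ofLex x1).1 < ℓ ∧ (ofLex x2).1 < ℓ
  · rw [dif_pos ⟨h.2, h.1⟩, dif_pos h]
  · rw [dif_neg fun hc => h ⟨hc.2, hc.1⟩, dif_neg h]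

lemma Fmap_mem {ν μ : Fin ℓ → List ℕ} {B : Fin ℓ → Fin ℓ → ℕ → ℕ → List ℕ}
    (hB : B ∈ BCM ℓ ν μ) : Fmap B hB.1 ∈ BW ℓ ν μ := by
  refine ⟨?_, Fmap_fst hB, ?_⟩
  · intro t x hx
    obtain ⟨p, q, i, j, rfl, hne⟩ := mem_Fmap hx
    have hlt := getD_ne_zero_lt_length hne
    have hlen := hB.2.2.1 p q i j
    exact ⟨by show (t : ℕ) ≤ (p : ℕ); omega, by show (t : ℕ) ≤ (q : ℕ); omega⟩
  · have hT := BCM_transpose hB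
    have hTf := Fmap_fst hT
    have heq : ∀ t : Fin ℓ, (Fmap B hB.1 t).map Prod.snd =
        (Fmap (fun p q i j => B q p j i) hT.1 t).map Prod.fst := by
      intro t
      rw [← Fmap_map_swap hB.1 hT.1 t, Multiset.map_map]
      rfl
    rw [Finset.sum_congr rfl fun t _ => heq t]
    exact hTf

lemma BW_swap {ν μ : Fin ℓ → List ℕ} {w : Fin ℓ → Multiset (Letter × Letter)}
    (hw : w ∈ BW ℓ ν μ) : (fun t => (w t).map Prod.swap) ∈ BW ℓ μ ν := by
  refine ⟨?_, ?_, ?_⟩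
  · intro i x hx
    obtain ⟨z, hz, rfl⟩ := Multiset.mem_map.mp hx
    exact ⟨(hw.1 i z hz).2, (hw.1 i z hz).1⟩
  · have : ∀ t : Fin ℓ, ((w t).map Prod.swap).map Prod.fst = (w t).map Prod.snd := by
      intro t
      rw [Multiset.map_map]
      rfl
    rw [Finset.sum_congr rfl fun t _ => this t]
    exact hw.2.2
  · have : ∀ t : Fin ℓ, ((w t).map Prod.swap).map Prod.snd = (w t).map Prod.fst := by
      intro t
      rw [Multiset.map_map]
      rfl
    rw [Finset.sum_congr rfl fun t _ => this t]
    exact hw.2.1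

lemma Gmap_swap (w : Fin ℓ → Multiset (Letter × Letter)) (p q : Fin ℓ) (i j : ℕ) :
    Gmap (fun t => (w t).map Prod.swap) p q i j = Gmap w q p j i := by
  rw [Gmap, Gmap]
  exact congrArg trimZ (congrArg List.ofFn (funext fun t => count_map_swap _ _ _))

lemma Gmap_fin (w : Fin ℓ → Multiset (Letter × Letter)) (p q : Fin ℓ) :
    {x : ℕ × ℕ | Gmap w p q x.1 x.2 ≠ []}.Finite := by
  have hfin : ∀ t : Fin ℓ,
      ({x : ℕ × ℕ | (toLex ((p : ℕ), x.1), toLex ((q : ℕ), x.2)) ∈ w t}).Finite := by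
    intro t
    apply Set.Finite.subset ((w t).toFinset.finite_toSet.image
      (fun z : Letter × Letter => ((ofLex z.1).2, (ofLex z.2).2)))
    rintro ⟨i, j⟩ h
    exact ⟨(toLex ((p : ℕ), i), toLex ((q : ℕ), j)), Multiset.mem_toFinset.mpr h, rfl⟩
  apply Set.Finite.subset (Set.finite_iUnion hfin)
  rintro ⟨i, j⟩ hne
  simp only [Set.mem_setOf_eq] at hne
  obtain ⟨t0, ht0⟩ := trimZ_ne_nil _ hne
  have hlt : t0 < ℓ := by simpa using getD_ne_zero_lt_length ht0
  rw [List.getD_eq_getElem _ 0 (by simpa using hlt), List.getElem_ofFn] at ht0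
  refine Set.mem_iUnion.mpr ⟨⟨t0, hlt⟩, ?_⟩
  exact Multiset.count_ne_zero.mp ht0

lemma Gmap_ntz (w : Fin ℓ → Multiset (Letter × Letter)) (p q : Fin ℓ) (i j : ℕ) :
    NoTrailingZero (Gmap w p q i j) := trimZ_ntz _

lemma Gmap_len {ν μ : Fin ℓ → List ℕ} {w : Fin ℓ → Multiset (Letter × Letter)}
    (hw : w ∈ BW ℓ ν μ) (p q : Fin ℓ) (i j : ℕ) :
    (Gmap w p q i j).length ≤ min (p : ℕ) (q : ℕ) + 1 := by
  by_cases hn : Gmap w p q i j = []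
  · simp [hn]
  · have hlast := ntz_getD_last _ (Gmap_ntz w p q i j) hn
    rw [getD_Gmap] at hlast
    split at hlast
    · next h =>
      have hmem := Multiset.count_ne_zero.mp hlast
      have hflag := hw.1 ⟨_, h⟩ _ hmem
      have h1 : (Gmap w p q i j).length - 1 ≤ (p : ℕ) := hflag.1
      have h2 : (Gmap w p q i j).length - 1 ≤ (q : ℕ) := hflag.2
      have h3 : (Gmap w p q i j).length ≠ 0 := fun hc => hn (List.eq_nil_of_length_eq_zero hc)
      omega
    · exact absurd rfl hlast

lemma Gmap_row (hl : 0 < ℓ) {ν μ : Fin ℓ → List ℕ} {w : Fin ℓ → Multiset (Letter × Letter)}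
    (hw : w ∈ BW ℓ ν μ) (s0 : Fin ℓ) (i : ℕ) :
    ∑ q : Fin ℓ, ∑ᶠ j, (Gmap w s0 q i j).sum = (ν s0).getD i 0 := by
  classical
  set s : Finset Letter := (∑ t : Fin ℓ, w t).toFinset.image Prod.snd with hs
  have hmem_s : ∀ (t : Fin ℓ) (x : Letter × Letter), x ∈ w t → x.2 ∈ s := by
    intro t x hx
    exact Finset.mem_image.mpr ⟨x, Multiset.mem_toFinset.mpr
      (Multiset.mem_sum.mpr ⟨t, Finset.mem_univ t, hx⟩), rfl⟩
  set g : Letter → ℕ :=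
    fun y => ∑ t : Fin ℓ, Multiset.count (toLex ((s0 : ℕ), i), y) (w t) with hg
  have stepA : ∀ q : Fin ℓ, ∑ᶠ j, (Gmap w s0 q i j).sum =
      ∑ y ∈ s.filter (fun y => (ofLex y).1 = (q : ℕ)), g y := by
    intro q
    have h1 : ∀ j, (Gmap w s0 q i j).sum = g (toLex ((q : ℕ), j)) := fun j => sum_Gmap w s0 q i j
    simp only [h1]
    rw [finsum_eq_sum_of_support_subset _
      (s := (s.filter (fun y => (ofLex y).1 = (q : ℕ))).image (fun y => (ofLex y).2))]
    · rw [Finset.sum_image]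
      · refine Finset.sum_congr rfl fun y hy => ?_
        have h2 := (Finset.mem_filter.mp hy).2
        congr 1
        rw [← h2]
        exact rfl
      · intro y hy y' hy' he
        have h2 := (Finset.mem_filter.mp hy).2
        have h3 := (Finset.mem_filter.mp hy').2
        have : ofLex y = ofLex y' := by
          rw [Prod.ext_iff]
          exact ⟨h2.trans h3.symm, he⟩
        exact ofLex.injective this
    · intro j hj
      rw [Function.mem_support, hg] at hj
      obtain ⟨t, -, ht⟩ := Finset.exists_ne_zero_of_sum_ne_zero hj
      have hmem := Multiset.count_ne_zero.mp ht
      have := hmem_s t _ hmem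
      refine Finset.mem_coe.mpr (Finset.mem_image.mpr ⟨toLex ((q : ℕ), j), ?_, rfl⟩)
      exact Finset.mem_filter.mpr ⟨this, rfl⟩
  simp only [stepA]
  have hproj : ∀ y ∈ s, (ofLex y).1 < ℓ := by
    intro y hy
    obtain ⟨x, hx, rfl⟩ := Finset.mem_image.mp hy
    obtain ⟨t, -, hxt⟩ := Multiset.mem_sum.mp (Multiset.mem_toFinset.mp hx)
    exact mem_alphabet (snd_mem_alphabet_of_mem hw hxt)
  have stepB : ∑ q : Fin ℓ, ∑ y ∈ s.filter (fun y => (ofLex y).1 = (q : ℕ)), g y =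
      ∑ y ∈ s, g y := by
    rw [← Finset.sum_fiberwise s (fun y => (⟨(ofLex y).1 % ℓ, Nat.mod_lt _ hl⟩ : Fin ℓ)) g]
    refine Finset.sum_congr rfl fun q _ => Finset.sum_congr ?_ fun y _ => rfl
    apply Finset.filter_congr
    intro y hy
    have := hproj y hy
    rw [Fin.ext_iff]
    simp only [Nat.mod_eq_of_lt this]
  rw [stepB]
  have stepC : ∑ y ∈ s, g y =
      ∑ t : Fin ℓ, Multiset.count (toLex ((s0 : ℕ), i)) ((w t).map Prod.fst) := by
    rw [Finset.sum_comm (s := s) (t := Finset.univ)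
      (f := fun y t => Multiset.count (toLex ((s0 : ℕ), i), y) (w t))]
    exact Finset.sum_congr rfl fun t _ => (count_fst (w t) s (hmem_s t) _).symm
  rw [stepC, ← Multiset.count_sum', hw.2.1]
  have := count_alphabet ℓ ν (s0 : ℕ) i
  rw [this, dif_pos s0.2]

lemma Gmap_mem (hl : 0 < ℓ) {ν μ : Fin ℓ → List ℕ} {w : Fin ℓ → Multiset (Letter × Letter)}
    (hw : w ∈ BW ℓ ν μ) : Gmap w ∈ BCM ℓ ν μ := by
  refine ⟨Gmap_fin w, Gmap_ntz w, Gmap_len hw, Gmap_row hl hw, ?_⟩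
  intro s t
  have hw' := BW_swap hw
  have := Gmap_row hl hw' s t
  simp only [Gmap_swap w] at this
  exact this

end BcmBwAux
/-- `BCM_ℓ(ν,μ)` is in bijection with `BW_ℓ(ν,μ)`, where the biletter
with top letter `i_p` and bottom letter `j_q` occurs in the `t`-th biword with multiplicity
the `t`-th part of the composition `b^{(pq)}_{ij}`. -/
theorem bcm_equiv_bw (ℓ n : ℕ) (hℓ : 1 ≤ ℓ) (ν μ : Fin ℓ → List ℕ)
    (hν : IsMultiComp ℓ n ν) (hμ : IsMultiComp ℓ n μ) :
    ∃ e : ↥(BCM ℓ ν μ) ≃ ↥(BW ℓ ν μ),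
      ∀ B : ↥(BCM ℓ ν μ), ∀ (t p q : Fin ℓ) (i j : ℕ),
        ((e B).1 t).count (toLex ((p : ℕ), i), toLex ((q : ℕ), j)) =
          (B.1 p q i j).getD (t : ℕ) 0 := by
  classical
  have hl : 0 < ℓ := hℓ
  refine ⟨{
    toFun := fun B => ⟨BcmBwAux.Fmap B.1 B.2.1, BcmBwAux.Fmap_mem B.2⟩
    invFun := fun w => ⟨BcmBwAux.Gmap w.1, BcmBwAux.Gmap_mem hl w.2⟩
    left_inv := ?_
    right_inv := ?_ }, ?_⟩
  · intro B
    exact Subtype.ext (BcmBwAux.Gmap_Fmap_eq B.2.1 B.2.2.1 B.2.2.2.1)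
  · intro w
    exact Subtype.ext (funext fun t => BcmBwAux.Fmap_Gmap_eq w.2 _ t)
  · intro B t p q i j
    have := BcmBwAux.count_Fmap B.1 B.2.1 t (p : ℕ) i (q : ℕ) j
    rw [dif_pos ⟨p.2, q.2⟩] at this
    exact this
end

section
/- Fix ℓ ≥ 1 and ℓ-multicompositions ν and μ of n. The cardinality of the set BCM_ℓ(ν,μ) of flagged ℓ×ℓ block composition matrices with row sum ν and column sum μ equals the cardinality of the set BW_ℓ(ν,μ) of (ν,μ)-flagged biwords, and both equal the cardinality of ParMat♭_{ν,μ}. -/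
/-- Strip trailing zeros from a list. -/
def strip : List ℕ → List ℕ
  | [] => []
  | a :: l => match strip l with
    | [] => if a = 0 then [] else [a]
    | b :: m => a :: b :: m

lemma strip_nil : strip [] = [] := rfl

lemma strip_eq_nil_iff : ∀ l : List ℕ, strip l = [] ↔ ∀ k, l.getD k 0 = 0 := by
  intro l; induction l with
  | nil => simp [strip]
  | cons a l ih =>
    constructor
    · intro h k
      simp only [strip] at h
      rcases hs : strip l with _ | ⟨b, m⟩
      · rw [hs] at h
        by_cases ha : a = 0
        · cases k with
          | zero => simpa
          | succ k => simpa using (ih.1 hs) k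
        · simp [ha] at h
      · rw [hs] at h; simp at h
    · intro h
      have h0 : a = 0 := h 0
      have hl : strip l = [] := ih.2 (fun k => h (k + 1))
      simp [strip, hl, h0]

lemma strip_getD (l : List ℕ) (k : ℕ) : (strip l).getD k 0 = l.getD k 0 := by
  induction l generalizing k with
  | nil => rfl
  | cons a l ih =>
    simp only [strip]
    rcases hs : strip l with _ | ⟨b, m⟩
    · have hz : ∀ k, l.getD k 0 = 0 := (strip_eq_nil_iff l).1 hs
      by_cases ha : a = 0
      · simp only [ha, if_pos rfl]
        cases k with
        | zero => simp
        | succ k => simpa using (hz k).symm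
      · simp only [if_neg ha]
        cases k with
        | zero => simp
        | succ k => simpa using (hz k).symm
    · cases k with
      | zero => simp
      | succ k => have := ih k; rw [hs] at this; simpa using this

lemma strip_sum (l : List ℕ) : (strip l).sum = l.sum := by
  induction l with
  | nil => rfl
  | cons a l ih =>
    simp only [strip]
    rcases hs : strip l with _ | ⟨b, m⟩
    · rw [hs] at ih
      by_cases ha : a = 0
      · simp [ha, ← ih]
      · simp [ha, ← ih]
    · rw [hs] at ih; simp [← ih]

lemma strip_length (l : List ℕ) : (strip l).length ≤ l.length := by
  induction l with
  | nil => simp [strip]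
  | cons a l ih =>
    simp only [strip]
    rcases hs : strip l with _ | ⟨b, m⟩
    · by_cases ha : a = 0 <;> simp [ha]
    · rw [hs] at ih; simpa using ih

lemma noTrailingZero_nil' : NoTrailingZero [] := fun h => absurd rfl h

lemma strip_noTrailingZero (l : List ℕ) : NoTrailingZero (strip l) := by
  induction l with
  | nil => intro h; simp [strip] at h
  | cons a l ih =>
    rcases hs : strip l with _ | ⟨b, m⟩
    · by_cases ha : a = 0
      · have : strip (a :: l) = [] := by simp [strip, hs, ha]
        rw [this]; exact noTrailingZero_nil'
      · have : strip (a :: l) = [a] := by simp [strip, hs, ha]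
        rw [this]; intro h; simpa using ha
    · have hst : strip (a :: l) = a :: b :: m := by simp [strip, hs]
      rw [hst]
      have hbm : NoTrailingZero (b :: m) := hs ▸ ih
      intro h
      rw [List.getLast_cons (by simp)]
      exact hbm (by simp)

lemma noTrailingZero_nil : NoTrailingZero [] := fun h => absurd rfl h

lemma eq_nil_of_noTrailingZero_of_getD (l : List ℕ) (hl : NoTrailingZero l)
    (h : ∀ k, l.getD k 0 = 0) : l = [] := by
  by_contra hne
  apply hl hne
  have hlen : 0 < l.length := List.length_pos_iff.2 hne
  rw [List.getLast_eq_getElem]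
  have := h (l.length - 1)
  rwa [List.getD_eq_getElem _ _ (by omega)] at this

lemma noTrailingZero_ext : ∀ (l₁ l₂ : List ℕ), NoTrailingZero l₁ → NoTrailingZero l₂ →
    (∀ k, l₁.getD k 0 = l₂.getD k 0) → l₁ = l₂ := by
  intro l₁
  induction l₁ with
  | nil =>
    intro l₂ _ h₂ h
    exact (eq_nil_of_noTrailingZero_of_getD l₂ h₂ (fun k => (h k).symm)).symm
  | cons a l ih =>
    intro l₂ h₁ h₂ h
    cases l₂ with
    | nil =>
      exact eq_nil_of_noTrailingZero_of_getD _ h₁ (fun k => h k)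
    | cons b m =>
      have hab : a = b := by simpa using h 0
      have hlm : l = m := by
        apply ih
        · intro hne
          have : (a :: l).getLast (by simp) ≠ 0 := h₁ _
          rwa [List.getLast_cons hne] at this
        · intro hne
          have : (b :: m).getLast (by simp) ≠ 0 := h₂ _
          rwa [List.getLast_cons hne] at this
        · intro k; simpa using h (k + 1)
      rw [hab, hlm]

lemma strip_eq_self (l : List ℕ) (hl : NoTrailingZero l) : strip l = l :=
  noTrailingZero_ext _ _ (strip_noTrailingZero l) hl (fun k => strip_getD l k)

lemma getD_map_range (f : ℕ → ℕ) (n k : ℕ) :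
    ((List.range n).map f).getD k 0 = if k < n then f k else 0 := by
  by_cases h : k < n
  · rw [List.getD_eq_getElem _ _ (by simpa using h)]
    simp [h]
  · rw [List.getD_eq_default _ _ (by simpa using not_lt.1 h)]
    simp [h]

lemma sum_map_range (f : ℕ → ℕ) (n : ℕ) :
    ((List.range n).map f).sum = ∑ k ∈ Finset.range n, f k := by
  induction n with
  | zero => simp
  | succ n ih => rw [List.range_succ, List.map_append, List.sum_append, Finset.sum_range_succ, ih]; simp

lemma list_sum_eq_sum_getD (l : List ℕ) :
    l.sum = ∑ k ∈ Finset.range l.length, l.getD k 0 := by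
  induction l with
  | nil => simp
  | cons a l ih =>
    rw [List.sum_cons, ih, List.length_cons, Finset.sum_range_succ']
    simp [Nat.add_comm]

/-- Reconstruction: a no-trailing-zero list is recovered from its `getD` values. -/
lemma strip_map_range_getD (l : List ℕ) (n : ℕ) (hl : NoTrailingZero l)
    (hn : l.length ≤ n) : strip ((List.range n).map (fun k => l.getD k 0)) = l := by
  apply noTrailingZero_ext _ _ (strip_noTrailingZero _) hl
  intro k
  rw [strip_getD, getD_map_range]
  by_cases h : k < n
  · simp [h]
  · rw [if_neg h, List.getD_eq_default _ _ (by omega)]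


/-- Tail sum of a list starting at position `m`. -/
def tailSum (c : List ℕ) (m : ℕ) : ℕ := ∑ j ∈ Finset.Ico m c.length, c.getD j 0

lemma tailSum_ext (c : List ℕ) (m N : ℕ) (hN : c.length ≤ N) :
    tailSum c m = ∑ j ∈ Finset.Ico m N, c.getD j 0 := by
  refine Finset.sum_subset (Finset.Ico_subset_Ico le_rfl hN) ?_
  intro j hj hj'
  simp only [Finset.mem_Ico] at hj hj'
  exact List.getD_eq_default _ _ (by omega)

lemma tailSum_zero_eq_sum (c : List ℕ) : tailSum c 0 = c.sum := by
  rw [tailSum, list_sum_eq_sum_getD, Finset.range_eq_Ico]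

lemma tailSum_sub_succ (c : List ℕ) (k : ℕ) :
    tailSum c k - tailSum c (k + 1) = c.getD k 0 := by
  by_cases h : k < c.length
  · rw [tailSum, tailSum, Finset.sum_eq_sum_Ico_succ_bot h]
    omega
  · rw [tailSum, tailSum, Finset.Ico_eq_empty (by omega), Finset.Ico_eq_empty (by omega),
      List.getD_eq_default _ _ (by omega)]
    simp

lemma tailSum_antitone (c : List ℕ) {m m' : ℕ} (h : m ≤ m') : tailSum c m' ≤ tailSum c m :=
  Finset.sum_le_sum_of_subset (Finset.Ico_subset_Ico h le_rfl)

lemma tailSum_eq_zero (c : List ℕ) {m : ℕ} (h : c.length ≤ m) : tailSum c m = 0 := by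
  rw [tailSum, Finset.Ico_eq_empty (by omega), Finset.sum_empty]

/-- Telescoping sum for a stepwise-antitone function over ℕ. -/
lemma telescope (h : ℕ → ℕ) (hmono : ∀ j, h (j + 1) ≤ h j) :
    ∀ m n, m ≤ n → ∑ j ∈ Finset.Ico m n, (h j - h (j + 1)) = h m - h n := by
  have hanti : Antitone h := antitone_nat_of_succ_le hmono
  intro m n
  induction n with
  | zero => intro hm; interval_cases m; simp
  | succ n ih =>
    intro hm
    rcases Nat.lt_or_ge m (n + 1) with hlt | hge
    · have hmn : m ≤ n := by omega
      rw [Finset.sum_Ico_succ_top hmn, ih hmn]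
      have h1 := hmono n
      have h2 := hanti hmn
      omega
    · have : m = n + 1 := by omega
      subst this; simp

/-- The partition of tail sums associated to a composition. -/
def toEta (c : List ℕ) : List ℕ :=
  (List.range (c.length - 1)).map (fun k => tailSum c (k + 1))

/-- The entries of the composition associated to `(a, η)`. -/
def compFun (a : ℕ) (η : List ℕ) : ℕ → ℕ
  | 0 => a - η.getD 0 0
  | k + 1 => η.getD k 0 - η.getD (k + 1) 0

/-- The composition associated to `(a, η)`. -/
def toComp (a : ℕ) (η : List ℕ) : List ℕ :=
  strip ((List.range (η.length + 1)).map (compFun a η))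

lemma toEta_getD (c : List ℕ) (k : ℕ) : (toEta c).getD k 0 = tailSum c (k + 1) := by
  rw [toEta, getD_map_range]
  by_cases h : k < c.length - 1
  · simp [h]
  · rw [if_neg h, eq_comm]
    exact tailSum_eq_zero c (by omega)

lemma partition_getD_antitone {η : List ℕ} (hη : IsPartitionList η) (k : ℕ) :
    η.getD (k + 1) 0 ≤ η.getD k 0 := by
  by_cases h : k + 1 < η.length
  · rw [List.getD_eq_getElem _ _ h, List.getD_eq_getElem _ _ (by omega)]
    exact (List.pairwise_iff_getElem.1 hη.1) k (k+1) (by omega) h (by omega)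
  · rw [List.getD_eq_default _ _ (by omega)]; exact Nat.zero_le _

lemma partition_getD_le {η : List ℕ} {a : ℕ} (hle : ∀ x ∈ η, x ≤ a) (k : ℕ) :
    η.getD k 0 ≤ a := by
  by_cases h : k < η.length
  · rw [List.getD_eq_getElem _ _ h]; exact hle _ (List.getElem_mem _)
  · rw [List.getD_eq_default _ _ (by omega)]; exact Nat.zero_le _

lemma partition_noTrailingZero {η : List ℕ} (hη : IsPartitionList η) : NoTrailingZero η :=
  fun h h0 => by have := hη.2 _ (List.getLast_mem h); omega

/-- Auxiliary "height" function for the telescoping description of `toComp`. -/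
def hFun (a : ℕ) (η : List ℕ) : ℕ → ℕ
  | 0 => a
  | k + 1 => η.getD k 0

lemma compFun_eq (a : ℕ) (η : List ℕ) (k : ℕ) :
    compFun a η k = hFun a η k - hFun a η (k + 1) := by
  cases k <;> rfl

lemma hFun_mono {a : ℕ} {η : List ℕ} (hη : IsPartitionList η) (hle : ∀ x ∈ η, x ≤ a)
    (j : ℕ) : hFun a η (j + 1) ≤ hFun a η j := by
  cases j with
  | zero => exact partition_getD_le hle 0
  | succ j => exact partition_getD_antitone hη j

lemma toComp_getD (a : ℕ) (η : List ℕ) (k : ℕ) :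
    (toComp a η).getD k 0 = if k < η.length + 1 then compFun a η k else 0 := by
  rw [toComp, strip_getD, getD_map_range]

lemma toComp_length (a : ℕ) (η : List ℕ) : (toComp a η).length ≤ η.length + 1 :=
  le_trans (strip_length _) (by simp)

lemma toComp_noTrailingZero (a : ℕ) (η : List ℕ) : NoTrailingZero (toComp a η) :=
  strip_noTrailingZero _

lemma toComp_tailSum {a : ℕ} {η : List ℕ} (hη : IsPartitionList η) (hle : ∀ x ∈ η, x ≤ a)
    (m : ℕ) (hm : m ≤ η.length + 1) :
    tailSum (toComp a η) m = hFun a η m := by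
  rw [tailSum_ext _ m (η.length + 1) (toComp_length a η)]
  have : ∀ j ∈ Finset.Ico m (η.length + 1), (toComp a η).getD j 0
      = hFun a η j - hFun a η (j + 1) := by
    intro j hj
    simp only [Finset.mem_Ico] at hj
    rw [toComp_getD, if_pos hj.2, compFun_eq]
  rw [Finset.sum_congr rfl this, telescope _ (hFun_mono hη hle) m _ hm]
  have : hFun a η (η.length + 1) = 0 := List.getD_eq_default _ _ le_rfl
  omega

lemma toComp_sum {a : ℕ} {η : List ℕ} (hη : IsPartitionList η) (hle : ∀ x ∈ η, x ≤ a) :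
    (toComp a η).sum = a := by
  rw [← tailSum_zero_eq_sum, toComp_tailSum hη hle 0 (by omega)]; rfl

lemma toEta_isPartition {c : List ℕ} (hc : NoTrailingZero c) : IsPartitionList (toEta c) := by
  constructor
  · rw [toEta]
    rw [List.pairwise_iff_getElem]
    intro i j hi hj hij
    simp only [List.getElem_map, List.getElem_range] at *
    exact tailSum_antitone c (by omega)
  · intro x hx
    rw [toEta] at hx
    simp only [List.mem_map, List.mem_range] at hx
    obtain ⟨k, hk, rfl⟩ := hx
    have hlen : 0 < c.length := by omega
    have hlast : 0 < c.getD (c.length - 1) 0 := by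
      have hne : c ≠ [] := by intro h; simp [h] at hlen
      have := hc hne
      rw [List.getLast_eq_getElem] at this
      rw [List.getD_eq_getElem _ _ (by omega)]
      omega
    calc 0 < c.getD (c.length - 1) 0 := hlast
    _ ≤ tailSum c (k + 1) := by
        refine Finset.single_le_sum (f := fun j => c.getD j 0) (fun _ _ => Nat.zero_le _) ?_
        simp only [Finset.mem_Ico]; omega

lemma toEta_length (c : List ℕ) : (toEta c).length = c.length - 1 := by simp [toEta]

lemma toEta_le_sum (c : List ℕ) : ∀ x ∈ toEta c, x ≤ c.sum := by
  intro x hx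
  rw [toEta] at hx
  simp only [List.mem_map, List.mem_range] at hx
  obtain ⟨k, hk, rfl⟩ := hx
  rw [← tailSum_zero_eq_sum]
  exact tailSum_antitone c (by omega)

/-- Round trip 1: `(a, η) → comp → (a, η)`. -/
lemma toEta_toComp {a : ℕ} {η : List ℕ} (hη : IsPartitionList η) (hle : ∀ x ∈ η, x ≤ a) :
    toEta (toComp a η) = η := by
  apply noTrailingZero_ext _ _ (partition_noTrailingZero (toEta_isPartition (toComp_noTrailingZero a η)))
    (partition_noTrailingZero hη)
  intro k
  rw [toEta_getD]
  by_cases hk : k + 1 ≤ η.length + 1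
  · rw [toComp_tailSum hη hle (k + 1) hk]; rfl
  · rw [tailSum_eq_zero _ (le_trans (toComp_length a η) (by omega)),
      List.getD_eq_default _ _ (by omega)]

/-- Round trip 2: `comp → (a, η) → comp`. -/
lemma toComp_toEta {c : List ℕ} (hc : NoTrailingZero c) : toComp c.sum (toEta c) = c := by
  apply noTrailingZero_ext _ _ (toComp_noTrailingZero _ _) hc
  intro k
  rw [toComp_getD, toEta_length]
  by_cases hk : k < c.length - 1 + 1
  · rw [if_pos hk]
    cases k with
    | zero =>
      show c.sum - (toEta c).getD 0 0 = _
      rw [toEta_getD, ← tailSum_zero_eq_sum, ← tailSum_sub_succ c 0]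
    | succ k =>
      show (toEta c).getD k 0 - (toEta c).getD (k + 1) 0 = _
      rw [toEta_getD, toEta_getD, ← tailSum_sub_succ c (k + 1)]
  · rw [if_neg hk, List.getD_eq_default _ _ (by omega), eq_comm]


/-! ### finsum helpers -/

lemma finsum_eq_sum_T (g : ℕ → ℕ) (T : Finset ℕ) (h : ∀ j, g j ≠ 0 → j ∈ T) :
    ∑ᶠ j, g j = ∑ j ∈ T, g j :=
  finsum_eq_finset_sum_of_support_subset g (fun j hj => h j hj)

/-- Collapse a `finsum` over the second coordinate to a sum over a covering finset. -/
lemma finsum_row (g : ℕ × ℕ → ℕ) (S : Finset (ℕ × ℕ)) (hS : ∀ x, g x ≠ 0 → x ∈ S) (i : ℕ) :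
    ∑ᶠ j, g (i, j) = ∑ x ∈ S, if x.1 = i then g x else 0 := by
  rw [← Finset.sum_filter]
  have hsub : (Function.support fun j => g (i, j)) ⊆
      ↑((S.filter (fun x => x.1 = i)).image Prod.snd) := by
    intro j hj
    simp only [Function.mem_support] at hj
    simp only [Finset.coe_image, Set.mem_image, Finset.mem_coe, Finset.mem_filter]
    exact ⟨(i, j), ⟨hS _ hj, rfl⟩, rfl⟩
  rw [finsum_eq_finset_sum_of_support_subset _ hsub]
  rw [Finset.sum_image ?_]
  · refine Finset.sum_congr rfl ?_
    intro x hx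
    simp only [Finset.mem_filter] at hx
    rw [show (i, x.2) = x from Prod.ext hx.2.symm rfl]
  · intro x hx y hy hxy
    simp only [Finset.mem_coe, Finset.mem_filter] at hx hy
    exact Prod.ext (hx.2.trans hy.2.symm) hxy

lemma finsum_col (g : ℕ × ℕ → ℕ) (S : Finset (ℕ × ℕ)) (hS : ∀ x, g x ≠ 0 → x ∈ S) (t : ℕ) :
    ∑ᶠ i, g (i, t) = ∑ x ∈ S, if x.2 = t then g x else 0 := by
  have := finsum_row (fun x => g (x.2, x.1)) (S.image (Prod.swap)) ?_ t
  · rw [this, Finset.sum_image ?_]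
    · exact Finset.sum_congr rfl (fun x _ => rfl)
    · intro x _ y _ h
      exact Prod.ext (congrArg Prod.snd h) (congrArg Prod.fst h)
  · intro x hx
    simp only [Finset.mem_image]
    exact ⟨(x.2, x.1), hS _ hx, rfl⟩

lemma rowSum_eq_finsum (M : (ℕ × ℕ) →₀ ℕ) (t : ℕ) : rowSum M t = ∑ᶠ j, M (t, j) := by
  rw [rowSum, finsum_row (fun x => M x) M.support (fun x hx => Finsupp.mem_support_iff.2 hx) t]

lemma colSum_eq_finsum (M : (ℕ × ℕ) →₀ ℕ) (t : ℕ) : colSum M t = ∑ᶠ i, M (i, t) := by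
  rw [colSum, finsum_col (fun x => M x) M.support (fun x hx => Finsupp.mem_support_iff.2 hx) t]

lemma noTrailingZero_sum_pos {l : List ℕ} (hl : NoTrailingZero l) (hne : l ≠ []) :
    0 < l.sum := by
  have hlen : 0 < l.length := List.length_pos_iff.2 hne
  have := hl hne
  rw [List.getLast_eq_getElem] at this
  rw [← tailSum_zero_eq_sum]
  calc 0 < l.getD (l.length - 1) 0 := by
        rw [List.getD_eq_getElem _ _ (by omega)]; omega
  _ ≤ tailSum l 0 := by
      refine Finset.single_le_sum (f := fun j => l.getD j 0) (fun _ _ => Nat.zero_le _) ?_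
      simp only [Finset.mem_Ico]; omega

/-! ### The bijection between `BCM` and `ParMat` -/

section BCMParMat

variable (ℓ : ℕ) (ν μ : Fin ℓ → List ℕ)

/-- From a flagged block composition matrix to a pair (matrix, partitions). -/
noncomputable def bcmToPar (B : Fin ℓ → Fin ℓ → ℕ → ℕ → List ℕ)
    (hfin : ∀ p q, {x : ℕ × ℕ | B p q x.1 x.2 ≠ []}.Finite) :
    (Fin ℓ → Fin ℓ → ((ℕ × ℕ) →₀ ℕ)) × (Fin ℓ → Fin ℓ → ℕ → ℕ → List ℕ) :=
  (fun p q => Finsupp.onFinset (hfin p q).toFinset (fun x => (B p q x.1 x.2).sum)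
    (fun x hx => by
      simp only [Set.Finite.mem_toFinset, Set.mem_setOf_eq]
      intro h
      apply hx
      show (B p q x.1 x.2).sum = 0
      rw [h]; rfl),
   fun p q i j => toEta (B p q i j))

lemma bcmToPar_mem (B : Fin ℓ → Fin ℓ → ℕ → ℕ → List ℕ) (hB : B ∈ BCM ℓ ν μ) :
    bcmToPar ℓ B hB.1 ∈ ParMat ℓ ν μ := by
  obtain ⟨hfin, hntz, hlen, hrow, hcol⟩ := hB
  refine ⟨?_, ?_, ?_, ?_, ?_⟩
  · intro s t
    rw [← hrow s t]
    refine Finset.sum_congr rfl (fun q _ => ?_)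
    rw [rowSum_eq_finsum]
    rfl
  · intro s t
    rw [← hcol s t]
    refine Finset.sum_congr rfl (fun p _ => ?_)
    rw [colSum_eq_finsum]
    rfl
  · intro p q i j
    exact toEta_isPartition (hntz p q i j)
  · intro p q i j x hx
    exact toEta_le_sum _ x hx
  · intro p q i j
    have := hlen p q i j
    simp only [bcmToPar, toEta_length]
    omega

/-- From a pair (matrix, partitions) to a flagged block composition matrix. -/
def parToBcm (AP : (Fin ℓ → Fin ℓ → ((ℕ × ℕ) →₀ ℕ)) × (Fin ℓ → Fin ℓ → ℕ → ℕ → List ℕ)) :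
    Fin ℓ → Fin ℓ → ℕ → ℕ → List ℕ :=
  fun p q i j => toComp (AP.1 p q (i, j)) (AP.2 p q i j)

lemma parToBcm_mem (AP : (Fin ℓ → Fin ℓ → ((ℕ × ℕ) →₀ ℕ)) × (Fin ℓ → Fin ℓ → ℕ → ℕ → List ℕ))
    (hAP : AP ∈ ParMat ℓ ν μ) : parToBcm ℓ AP ∈ BCM ℓ ν μ := by
  obtain ⟨hrow, hcol, hpart, hle, hlen⟩ := hAP
  have hsum : ∀ p q i j, (toComp (AP.1 p q (i, j)) (AP.2 p q i j)).sum = AP.1 p q (i, j) :=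
    fun p q i j => toComp_sum (hpart p q i j) (hle p q i j)
  refine ⟨?_, ?_, ?_, ?_, ?_⟩
  · intro p q
    refine Set.Finite.subset (AP.1 p q).support.finite_toSet ?_
    rintro ⟨i, j⟩ hx
    simp only [Set.mem_setOf_eq] at hx
    simp only [Finset.mem_coe, Finsupp.mem_support_iff]
    have h1 : 0 < (toComp (AP.1 p q (i, j)) (AP.2 p q i j)).sum :=
      noTrailingZero_sum_pos (toComp_noTrailingZero _ _) hx
    rw [hsum p q i j] at h1
    omega
  · intro p q i j; exact toComp_noTrailingZero _ _
  · intro p q i j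
    exact le_trans (toComp_length (AP.1 p q (i, j)) (AP.2 p q i j))
      (by have := hlen p q i j; omega)
  · intro s t
    rw [← hrow s t]
    refine Finset.sum_congr rfl (fun q _ => ?_)
    rw [rowSum_eq_finsum]
    exact finsum_congr (fun j => hsum s q t j)
  · intro s t
    rw [← hcol s t]
    refine Finset.sum_congr rfl (fun p _ => ?_)
    rw [colSum_eq_finsum]
    exact finsum_congr (fun i => hsum p s i t)

lemma parToBcm_bcmToPar (B : Fin ℓ → Fin ℓ → ℕ → ℕ → List ℕ) (hB : B ∈ BCM ℓ ν μ) :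
    parToBcm ℓ (bcmToPar ℓ B hB.1) = B := by
  funext p q i j
  exact toComp_toEta (hB.2.1 p q i j)

lemma bcmToPar_parToBcm (AP : (Fin ℓ → Fin ℓ → ((ℕ × ℕ) →₀ ℕ)) × (Fin ℓ → Fin ℓ → ℕ → ℕ → List ℕ))
    (hAP : AP ∈ ParMat ℓ ν μ) (hfin : ∀ p q, {x : ℕ × ℕ | parToBcm ℓ AP p q x.1 x.2 ≠ []}.Finite) :
    bcmToPar ℓ (parToBcm ℓ AP) hfin = AP := by
  obtain ⟨hrow, hcol, hpart, hle, hlen⟩ := hAP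
  refine Prod.ext ?_ ?_
  · funext p q
    refine Finsupp.ext (fun x => ?_)
    show (parToBcm ℓ AP p q x.1 x.2).sum = _
    rw [show (parToBcm ℓ AP p q x.1 x.2) = toComp (AP.1 p q (x.1, x.2)) (AP.2 p q x.1 x.2) from rfl,
      toComp_sum (hpart p q x.1 x.2) (hle p q x.1 x.2)]
  · funext p q i j
    exact toEta_toComp (hpart p q i j) (hle p q i j)

noncomputable def bcmParEquiv : ↥(BCM ℓ ν μ) ≃ ↥(ParMat ℓ ν μ) where
  toFun B := ⟨bcmToPar ℓ B.1 B.2.1, bcmToPar_mem ℓ ν μ B.1 B.2⟩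
  invFun AP := ⟨parToBcm ℓ AP.1, parToBcm_mem ℓ ν μ AP.1 AP.2⟩
  left_inv B := Subtype.ext (parToBcm_bcmToPar ℓ ν μ B.1 B.2)
  right_inv AP := Subtype.ext (bcmToPar_parToBcm ℓ ν μ AP.1 AP.2 _)

end BCMParMat

/-! ### Multiset counting helpers -/

section MultisetHelpers

lemma finsum_sum_swap {α : Type*} (s : Finset α) (f : α → ℕ → ℕ) (T : Finset ℕ)
    (hT : ∀ a ∈ s, ∀ j, f a j ≠ 0 → j ∈ T) :
    ∑ᶠ j, (∑ a ∈ s, f a j) = ∑ a ∈ s, ∑ᶠ j, f a j := by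
  rw [finsum_eq_sum_T _ T (fun j hj => by
    obtain ⟨a, ha, hfa⟩ := Finset.exists_ne_zero_of_sum_ne_zero hj
    exact hT a ha j hfa)]
  rw [Finset.sum_comm]
  exact Finset.sum_congr rfl fun a ha => (finsum_eq_sum_T _ T (hT a ha)).symm

variable {α β : Type*} [DecidableEq α] [DecidableEq β]

lemma count_map_fst_toFinset (m : Multiset (α × β)) (x : α) :
    Multiset.count x (m.map Prod.fst) =
      ∑ z ∈ m.toFinset, if z.1 = x then Multiset.count z m else 0 := by
  conv_lhs => rw [← Multiset.toFinset_sum_count_nsmul_eq m,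
    ← Multiset.coe_mapAddMonoidHom, map_sum]
  rw [Multiset.count_sum']
  refine Finset.sum_congr rfl fun z hz => ?_
  rw [Multiset.coe_mapAddMonoidHom, Multiset.map_nsmul, Multiset.map_singleton,
    Multiset.count_nsmul, Multiset.count_singleton]
  by_cases h : z.1 = x
  · simp [h]
  · rw [if_neg (fun hh => h hh.symm), if_neg h, mul_zero]

lemma count_le_count_map_fst (m : Multiset (α × β)) (z : α × β) :
    Multiset.count z m ≤ Multiset.count z.1 (m.map Prod.fst) := by
  rw [Multiset.count_eq_card_filter_eq, Multiset.count_map]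
  refine Multiset.card_le_card (Multiset.monotone_filter_right m ?_)
  intro a h
  rw [h]

lemma count_le_count_map_snd (m : Multiset (α × β)) (z : α × β) :
    Multiset.count z m ≤ Multiset.count z.2 (m.map Prod.snd) := by
  rw [Multiset.count_eq_card_filter_eq, Multiset.count_map]
  refine Multiset.card_le_card (Multiset.monotone_filter_right m ?_)
  intro a h
  rw [h]

end MultisetHelpers

/-! ### Letter-specific counting -/

section LetterCount

variable {ℓ : ℕ}

lemma count_map_fst (m : Multiset (Letter × Letter)) (hm : ∀ z ∈ m, (ofLex z.2).1 < ℓ)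
    (x : Letter) :
    Multiset.count x (m.map Prod.fst) =
      ∑ q : Fin ℓ, ∑ᶠ j, Multiset.count (x, toLex ((q : ℕ), j)) m := by
  rw [count_map_fst_toFinset]
  have key : ∀ q : Fin ℓ, ∑ᶠ j, Multiset.count (x, toLex ((q : ℕ), j)) m
      = ∑ z ∈ m.toFinset, if z.1 = x ∧ (ofLex z.2).1 = (q : ℕ)
          then Multiset.count z m else 0 := by
    intro q
    rw [finsum_eq_sum_T _ ((m.toFinset.filter
        (fun z => z.1 = x ∧ (ofLex z.2).1 = (q : ℕ))).image (fun z => (ofLex z.2).2))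
      (fun j hj => ?_)]
    · rw [Finset.sum_image (fun z hz z' hz' hzz => ?_)]
      · rw [← Finset.sum_filter]
        refine Finset.sum_congr rfl fun z hz => ?_
        simp only [Finset.mem_filter, Multiset.mem_toFinset] at hz
        obtain ⟨hz1, hzx, hzq⟩ := hz
        congr 1
        refine Prod.ext hzx.symm ?_
        show toLex ((q : ℕ), (ofLex z.2).2) = z.2
        rw [← hzq]
        exact toLex_ofLex z.2
      · simp only [Finset.mem_coe, Finset.mem_filter, Multiset.mem_toFinset] at hz hz'
        refine Prod.ext (hz.2.1.trans hz'.2.1.symm) ?_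
        have : ofLex z.2 = ofLex z'.2 :=
          Prod.ext (hz.2.2.trans hz'.2.2.symm) hzz
        exact congrArg toLex this
    · simp only [Finset.mem_image, Finset.mem_filter, Multiset.mem_toFinset]
      refine ⟨(x, toLex ((q : ℕ), j)), ⟨?_, rfl, rfl⟩, rfl⟩
      exact Multiset.count_pos.1 (Nat.pos_of_ne_zero hj)
  rw [Finset.sum_congr rfl (fun q _ => key q), Finset.sum_comm]
  refine Finset.sum_congr rfl fun z hz => ?_
  by_cases hzx : z.1 = x
  · rw [if_pos hzx]
    have hq : (ofLex z.2).1 < ℓ := hm z (Multiset.mem_toFinset.1 hz)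
    rw [Finset.sum_eq_single (⟨(ofLex z.2).1, hq⟩ : Fin ℓ)]
    · rw [if_pos ⟨hzx, rfl⟩]
    · intro q _ hqne
      apply if_neg
      rintro ⟨-, hc⟩
      exact hqne (Fin.ext hc.symm)
    · intro hc; exact absurd (Finset.mem_univ _) hc
  · rw [if_neg hzx]
    refine (Finset.sum_eq_zero fun q _ => ?_).symm
    apply if_neg
    rintro ⟨hc, -⟩
    exact hzx hc

lemma count_map_snd (m : Multiset (Letter × Letter)) (hm : ∀ z ∈ m, (ofLex z.1).1 < ℓ)
    (y : Letter) :
    Multiset.count y (m.map Prod.snd) =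
      ∑ p : Fin ℓ, ∑ᶠ i, Multiset.count (toLex ((p : ℕ), i), y) m := by
  have hmm : m.map Prod.snd = (m.map Prod.swap).map Prod.fst := by
    rw [Multiset.map_map]; rfl
  rw [hmm, count_map_fst (m.map Prod.swap) (fun z hz => ?_) y]
  · refine Finset.sum_congr rfl fun p _ => finsum_congr fun i => ?_
    exact Multiset.count_map_eq_count' Prod.swap m Prod.swap_injective (toLex ((p : ℕ), i), y)
  · rw [Multiset.mem_map] at hz
    obtain ⟨a, ha, rfl⟩ := hz
    exact hm a ha

lemma count_content (b : Fin ℓ) (c : List ℕ) (y : Letter) :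
    Multiset.count y (contentMultiset c (fun a => toLex ((b : ℕ), a)))
      = if (ofLex y).1 = (b : ℕ) then c.getD (ofLex y).2 0 else 0 := by
  rw [contentMultiset, Multiset.count_bind]
  have : (Multiset.range c.length).map
      (fun a => Multiset.count y (Multiset.replicate (c.getD a 0) (toLex ((b : ℕ), a))))
      = (Multiset.range c.length).map
      (fun a => if (ofLex y).1 = (b : ℕ) ∧ (ofLex y).2 = a then c.getD a 0 else 0) := by
    refine Multiset.map_congr rfl fun a _ => ?_
    rw [Multiset.count_replicate]
    congr 1
    rw [show (toLex ((b : ℕ), a) = y) ↔ _ from by rw [← toLex_ofLex y, toLex_inj], Prod.ext_iff]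
    simp [eq_comm, and_comm]
  rw [this]
  have hsum : ((Multiset.range c.length).map
      (fun a => if (ofLex y).1 = (b : ℕ) ∧ (ofLex y).2 = a then c.getD a 0 else 0)).sum
      = ∑ a ∈ Finset.range c.length,
        (if (ofLex y).1 = (b : ℕ) ∧ (ofLex y).2 = a then c.getD a 0 else 0) := rfl
  rw [hsum]
  by_cases hb : (ofLex y).1 = (b : ℕ)
  · simp only [hb, true_and, if_pos]
    have : ∀ a ∈ Finset.range c.length,
        (if (ofLex y).2 = a then c.getD a 0 else 0)
        = if a = (ofLex y).2 then c.getD a 0 else 0 := by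
      intro a _; simp [eq_comm]
    rw [Finset.sum_congr rfl this, Finset.sum_ite_eq']
    by_cases hy : (ofLex y).2 ∈ Finset.range c.length
    · rw [if_pos hy]
    · rw [if_neg hy, List.getD_eq_default]
      simpa using hy
  · rw [if_neg hb]
    exact Finset.sum_eq_zero fun a _ => if_neg (fun hc => hb hc.1)

lemma count_alphabet (ν : Fin ℓ → List ℕ) (y : Letter) :
    Multiset.count y (alphabetMultiset ℓ ν) =
      if h : (ofLex y).1 < ℓ then (ν ⟨(ofLex y).1, h⟩).getD (ofLex y).2 0 else 0 := by
  rw [alphabetMultiset, Multiset.count_sum']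
  rw [Finset.sum_congr rfl (fun b _ => count_content b (ν b) y)]
  by_cases h : (ofLex y).1 < ℓ
  · rw [dif_pos h, Finset.sum_eq_single (⟨(ofLex y).1, h⟩ : Fin ℓ)]
    · rw [if_pos rfl]
    · intro b _ hbne
      exact if_neg (fun hc => hbne (Fin.ext hc.symm))
    · intro hc; exact absurd (Finset.mem_univ _) hc
  · rw [dif_neg h]
    refine Finset.sum_eq_zero fun b _ => if_neg (fun hc => h ?_)
    rw [hc]; exact b.2

lemma mem_alphabet {ν : Fin ℓ → List ℕ} {y : Letter} (hy : y ∈ alphabetMultiset ℓ ν) :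
    (ofLex y).1 < ℓ := by
  by_contra h
  have := Multiset.count_pos.2 hy
  rw [count_alphabet, dif_neg h] at this
  omega

end LetterCount

/-! ### The bijection between `BW` and `BCM` -/

section BWBCM

variable {ℓ : ℕ}

/-- The biletter with top letter `i_p` and bottom letter `j_q`. -/
def bilet (p q : Fin ℓ) (i j : ℕ) : Letter × Letter :=
  (toLex ((p : ℕ), i), toLex ((q : ℕ), j))

lemma bilet_eq_iff {p q p' q' : Fin ℓ} {i j i' j' : ℕ} :
    bilet p q i j = bilet p' q' i' j' ↔ (p = p' ∧ i = i') ∧ (q = q' ∧ j = j') := by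
  simp [bilet, Prod.ext_iff, Fin.ext_iff]

/-- Number of occurrences of the biletter `(i_p, j_q)` in the `k`-th biword. -/
def cntAt (w : Fin ℓ → Multiset (Letter × Letter)) (p q : Fin ℓ) (i j : ℕ) (k : ℕ) : ℕ :=
  if h : k < ℓ then Multiset.count (bilet p q i j) (w ⟨k, h⟩) else 0

/-- From a tuple of biwords to a flagged block composition matrix. -/
def bwToBcm (w : Fin ℓ → Multiset (Letter × Letter)) : Fin ℓ → Fin ℓ → ℕ → ℕ → List ℕ :=
  fun p q i j => strip ((List.range (min (p : ℕ) (q : ℕ) + 1)).map (cntAt w p q i j))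

/-- From a flagged block composition matrix to a tuple of biwords. -/
noncomputable def bcmToBw (B : Fin ℓ → Fin ℓ → ℕ → ℕ → List ℕ)
    (hfin : ∀ p q, {x : ℕ × ℕ | B p q x.1 x.2 ≠ []}.Finite) :
    Fin ℓ → Multiset (Letter × Letter) :=
  fun k => ∑ p : Fin ℓ, ∑ q : Fin ℓ, ∑ x ∈ (hfin p q).toFinset,
    Multiset.replicate ((B p q x.1 x.2).getD (k : ℕ) 0) (bilet p q x.1 x.2)

lemma count_bcmToBw (B : Fin ℓ → Fin ℓ → ℕ → ℕ → List ℕ)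
    (hfin : ∀ p q, {x : ℕ × ℕ | B p q x.1 x.2 ≠ []}.Finite)
    (p q : Fin ℓ) (i j : ℕ) (k : Fin ℓ) :
    Multiset.count (bilet p q i j) (bcmToBw B hfin k) = (B p q i j).getD (k : ℕ) 0 := by
  rw [bcmToBw]
  simp only [Multiset.count_sum', Multiset.count_replicate]
  rw [Finset.sum_eq_single p]
  rotate_left
  · intro p' _ hne
    refine Finset.sum_eq_zero fun q' _ => Finset.sum_eq_zero fun x _ => ?_
    apply if_neg
    rw [bilet_eq_iff]
    rintro ⟨⟨hp, -⟩, -⟩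
    exact hne hp
  · intro hc; exact absurd (Finset.mem_univ _) hc
  rw [Finset.sum_eq_single q]
  rotate_left
  · intro q' _ hne
    refine Finset.sum_eq_zero fun x _ => ?_
    apply if_neg
    rw [bilet_eq_iff]
    rintro ⟨-, ⟨hq, -⟩⟩
    exact hne hq
  · intro hc; exact absurd (Finset.mem_univ _) hc
  have hcongr : ∀ x ∈ (hfin p q).toFinset,
      (if bilet p q x.1 x.2 = bilet p q i j then (B p q x.1 x.2).getD (k : ℕ) 0 else 0)
      = if x = (i, j) then (B p q x.1 x.2).getD (k : ℕ) 0 else 0 := by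
    intro x _
    congr 1
    rw [bilet_eq_iff]
    simp [Prod.ext_iff]
  rw [Finset.sum_congr rfl hcongr, Finset.sum_ite_eq']
  by_cases hmem : (i, j) ∈ (hfin p q).toFinset
  · rw [if_pos hmem]
  · rw [if_neg hmem]
    rw [Set.Finite.mem_toFinset, Set.mem_setOf_eq, not_not] at hmem
    rw [hmem]
    rfl

lemma mem_bcmToBw {B : Fin ℓ → Fin ℓ → ℕ → ℕ → List ℕ}
    {hfin : ∀ p q, {x : ℕ × ℕ | B p q x.1 x.2 ≠ []}.Finite}
    {k : Fin ℓ} {z : Letter × Letter} (hz : z ∈ bcmToBw B hfin k) :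
    ∃ p q i j, z = bilet p q i j ∧ (B p q i j).getD (k : ℕ) 0 ≠ 0 := by
  rw [bcmToBw, Multiset.mem_sum] at hz
  obtain ⟨p, -, hz⟩ := hz
  rw [Multiset.mem_sum] at hz
  obtain ⟨q, -, hz⟩ := hz
  rw [Multiset.mem_sum] at hz
  obtain ⟨x, -, hz⟩ := hz
  rw [Multiset.mem_replicate] at hz
  exact ⟨p, q, x.1, x.2, hz.2, hz.1⟩

lemma sum_getD_univ {l : List ℕ} (h : l.length ≤ ℓ) :
    ∑ k : Fin ℓ, l.getD (k : ℕ) 0 = l.sum := by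
  rw [Fin.sum_univ_eq_sum_range (fun k => l.getD k 0), list_sum_eq_sum_getD]
  symm
  refine Finset.sum_subset (Finset.range_subset_range.2 h) ?_
  intro k _ hk
  simp only [Finset.mem_range, not_lt] at hk
  exact List.getD_eq_default _ _ hk

lemma bwToBcm_getD (w : Fin ℓ → Multiset (Letter × Letter)) (p q : Fin ℓ) (i j k : ℕ) :
    (bwToBcm w p q i j).getD k 0
      = if k < min (p : ℕ) (q : ℕ) + 1 then cntAt w p q i j k else 0 := by
  rw [bwToBcm, strip_getD, getD_map_range]

end BWBCM

section BWBCM2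

variable {ℓ : ℕ} {ν μ : Fin ℓ → List ℕ}

lemma cntAt_eq_zero {w : Fin ℓ → Multiset (Letter × Letter)} (hw : w ∈ BW ℓ ν μ)
    (p q : Fin ℓ) (i j k : ℕ) (hk : min (p : ℕ) (q : ℕ) + 1 ≤ k) :
    cntAt w p q i j k = 0 := by
  rw [cntAt]
  split_ifs with h
  · rw [Multiset.count_eq_zero]
    intro hmem
    have := hw.1 ⟨k, h⟩ _ hmem
    simp only [bilet, ofLex_toLex] at this
    omega
  · rfl

lemma bwToBcm_sum {w : Fin ℓ → Multiset (Letter × Letter)} (hw : w ∈ BW ℓ ν μ)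
    (p q : Fin ℓ) (i j : ℕ) :
    (bwToBcm w p q i j).sum = ∑ k : Fin ℓ, Multiset.count (bilet p q i j) (w k) := by
  rw [bwToBcm, strip_sum, sum_map_range]
  have h1 : ∑ k : Fin ℓ, Multiset.count (bilet p q i j) (w k)
      = ∑ k ∈ Finset.range ℓ, cntAt w p q i j k := by
    rw [← Fin.sum_univ_eq_sum_range (fun k => cntAt w p q i j k)]
    refine Finset.sum_congr rfl fun k _ => ?_
    rw [cntAt, dif_pos k.2]
  rw [h1]
  refine Finset.sum_subset (Finset.range_subset_range.2 ?_) ?_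
  · have := p.2; have := q.2; omega
  · intro k _ hk
    simp only [Finset.mem_range, not_lt] at hk
    exact cntAt_eq_zero hw p q i j k hk

lemma bwToBcm_mem {w : Fin ℓ → Multiset (Letter × Letter)} (hw : w ∈ BW ℓ ν μ) :
    bwToBcm w ∈ BCM ℓ ν μ := by
  refine ⟨?_, ?_, ?_, ?_, ?_⟩
  · -- finiteness
    intro p q
    have hinj : Function.Injective (fun x : ℕ × ℕ => bilet p q x.1 x.2) := by
      intro a b h
      rw [bilet_eq_iff] at h
      exact Prod.ext h.1.2 h.2.2
    refine Set.Finite.subset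
      (Set.finite_iUnion (fun k : Fin ℓ =>
        ((w k).finite_toSet.preimage hinj.injOn))) ?_
    intro x hx
    have hntz : NoTrailingZero (bwToBcm w p q x.1 x.2) := strip_noTrailingZero _
    have hpos := noTrailingZero_sum_pos hntz hx
    rw [bwToBcm_sum hw] at hpos
    obtain ⟨k, -, hk⟩ := Finset.exists_ne_zero_of_sum_ne_zero (by omega :
      ∑ k : Fin ℓ, Multiset.count (bilet p q x.1 x.2) (w k) ≠ 0)
    refine Set.mem_iUnion.2 ⟨k, ?_⟩
    exact Multiset.count_pos.1 (Nat.pos_of_ne_zero hk)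
  · intro p q i j; exact strip_noTrailingZero _
  · intro p q i j; exact le_trans (strip_length _) (by simp)
  · -- row sums
    intro s t
    have hx : (ν s).getD t 0 = Multiset.count (toLex ((s : ℕ), t)) (alphabetMultiset ℓ ν) := by
      rw [count_alphabet]
      simp only [ofLex_toLex]
      simp [s.2]
    rw [hx, ← hw.2.1, Multiset.count_sum']
    have hm : ∀ k : Fin ℓ, ∀ z ∈ w k, (ofLex z.2).1 < ℓ := by
      intro k z hz
      refine mem_alphabet (ν := μ) ?_
      rw [← hw.2.2]
      exact Multiset.mem_sum.2 ⟨k, Finset.mem_univ k, Multiset.mem_map_of_mem _ hz⟩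
    rw [Finset.sum_congr rfl (fun k _ => count_map_fst (w k) (hm k) (toLex ((s : ℕ), t)))]
    rw [Finset.sum_comm]
    refine Finset.sum_congr rfl fun q _ => ?_
    rw [← finsum_sum_swap Finset.univ
      (fun (k : Fin ℓ) j => Multiset.count (toLex ((s : ℕ), t), toLex ((q : ℕ), j)) (w k))
      (Finset.univ.biUnion (fun k : Fin ℓ => (w k).toFinset.image (fun z => (ofLex z.2).2)))
      (fun k _ j hj => ?_)]
    · refine finsum_congr fun j => ?_
      rw [bwToBcm_sum hw]
      rfl
    · refine Finset.mem_biUnion.2 ⟨k, Finset.mem_univ k, Finset.mem_image.2 ?_⟩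
      exact ⟨_, Multiset.mem_toFinset.2 (Multiset.count_pos.1 (Nat.pos_of_ne_zero hj)), rfl⟩
  · -- column sums
    intro s t
    have hx : (μ s).getD t 0 = Multiset.count (toLex ((s : ℕ), t)) (alphabetMultiset ℓ μ) := by
      rw [count_alphabet]
      simp only [ofLex_toLex]
      simp [s.2]
    rw [hx, ← hw.2.2, Multiset.count_sum']
    have hm : ∀ k : Fin ℓ, ∀ z ∈ w k, (ofLex z.1).1 < ℓ := by
      intro k z hz
      refine mem_alphabet (ν := ν) ?_
      rw [← hw.2.1]
      exact Multiset.mem_sum.2 ⟨k, Finset.mem_univ k, Multiset.mem_map_of_mem _ hz⟩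
    rw [Finset.sum_congr rfl (fun k _ => count_map_snd (w k) (hm k) (toLex ((s : ℕ), t)))]
    rw [Finset.sum_comm]
    refine Finset.sum_congr rfl fun p _ => ?_
    rw [← finsum_sum_swap Finset.univ
      (fun (k : Fin ℓ) i => Multiset.count (toLex ((p : ℕ), i), toLex ((s : ℕ), t)) (w k))
      (Finset.univ.biUnion (fun k : Fin ℓ => (w k).toFinset.image (fun z => (ofLex z.1).2)))
      (fun k _ i hi => ?_)]
    · refine finsum_congr fun i => ?_
      rw [bwToBcm_sum hw]
      rfl
    · refine Finset.mem_biUnion.2 ⟨k, Finset.mem_univ k, Finset.mem_image.2 ?_⟩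
      exact ⟨_, Multiset.mem_toFinset.2 (Multiset.count_pos.1 (Nat.pos_of_ne_zero hi)), rfl⟩

end BWBCM2

section BWBCM3

variable {ℓ : ℕ} {ν μ : Fin ℓ → List ℕ}

lemma bcmToBw_mem {B : Fin ℓ → Fin ℓ → ℕ → ℕ → List ℕ} (hB : B ∈ BCM ℓ ν μ) :
    bcmToBw B hB.1 ∈ BW ℓ ν μ := by
  have hsndlt : ∀ (k : Fin ℓ), ∀ z ∈ bcmToBw B hB.1 k, (ofLex z.2).1 < ℓ := by
    intro k z hz
    obtain ⟨p, q, i, j, rfl, -⟩ := mem_bcmToBw hz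
    simpa only [bilet, ofLex_toLex] using q.2
  have hfstlt : ∀ (k : Fin ℓ), ∀ z ∈ bcmToBw B hB.1 k, (ofLex z.1).1 < ℓ := by
    intro k z hz
    obtain ⟨p, q, i, j, rfl, -⟩ := mem_bcmToBw hz
    simpa only [bilet, ofLex_toLex] using p.2
  refine ⟨?_, ?_, ?_⟩
  · -- flagging
    intro k z hz
    obtain ⟨p, q, i, j, rfl, hne⟩ := mem_bcmToBw hz
    have hk : (k : ℕ) < (B p q i j).length := by
      by_contra h
      exact hne (List.getD_eq_default _ _ (by omega))
    have hlen := hB.2.2.1 p q i j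
    constructor
    · show (k : ℕ) ≤ (ofLex (toLex ((p : ℕ), i))).1
      simp only [ofLex_toLex]
      omega
    · show (k : ℕ) ≤ (ofLex (toLex ((q : ℕ), j))).1
      simp only [ofLex_toLex]
      omega
  · -- top content
    refine Multiset.ext.2 fun y => ?_
    rw [Multiset.count_sum', count_alphabet]
    by_cases hb : (ofLex y).1 < ℓ
    · rw [dif_pos hb]
      have hcongr : ∀ k : Fin ℓ, Multiset.count y ((bcmToBw B hB.1 k).map Prod.fst)
          = ∑ q : Fin ℓ, ∑ᶠ j, (B ⟨(ofLex y).1, hb⟩ q (ofLex y).2 j).getD (k : ℕ) 0 := by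
        intro k
        rw [count_map_fst _ (hsndlt k) y]
        refine Finset.sum_congr rfl fun q _ => finsum_congr fun j => ?_
        have hy : (y, toLex ((q : ℕ), j)) = bilet ⟨(ofLex y).1, hb⟩ q (ofLex y).2 j := by
          rw [bilet]
          exact Prod.ext (toLex_ofLex y).symm rfl
        rw [hy, count_bcmToBw]
      rw [Finset.sum_congr rfl (fun k _ => hcongr k), Finset.sum_comm,
        ← hB.2.2.2.1 ⟨(ofLex y).1, hb⟩ (ofLex y).2]
      refine Finset.sum_congr rfl fun q _ => ?_
      rw [← finsum_sum_swap Finset.univ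
        (fun (k : Fin ℓ) j => (B ⟨(ofLex y).1, hb⟩ q (ofLex y).2 j).getD (k : ℕ) 0)
        ((hB.1 ⟨(ofLex y).1, hb⟩ q).toFinset.image Prod.snd)
        (fun k _ j hj => ?_)]
      · refine finsum_congr fun j => ?_
        refine sum_getD_univ (le_trans (hB.2.2.1 ⟨(ofLex y).1, hb⟩ q (ofLex y).2 j) ?_)
        have := q.2; omega
      · refine Finset.mem_image.2 ⟨((ofLex y).2, j), ?_, rfl⟩
        rw [Set.Finite.mem_toFinset, Set.mem_setOf_eq]
        intro hc
        apply hj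
        show (B ⟨(ofLex y).1, hb⟩ q (ofLex y).2 j).getD (k : ℕ) 0 = 0
        rw [show B ⟨(ofLex y).1, hb⟩ q (ofLex y).2 j = [] from hc]
        rfl
    · rw [dif_neg hb]
      refine Finset.sum_eq_zero fun k _ => ?_
      rw [Multiset.count_eq_zero]
      intro hy
      rw [Multiset.mem_map] at hy
      obtain ⟨z, hz, rfl⟩ := hy
      exact hb (hfstlt k z hz)
  · -- bottom content
    refine Multiset.ext.2 fun y => ?_
    rw [Multiset.count_sum', count_alphabet]
    by_cases hb : (ofLex y).1 < ℓ
    · rw [dif_pos hb]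
      have hcongr : ∀ k : Fin ℓ, Multiset.count y ((bcmToBw B hB.1 k).map Prod.snd)
          = ∑ p : Fin ℓ, ∑ᶠ i, (B p ⟨(ofLex y).1, hb⟩ i (ofLex y).2).getD (k : ℕ) 0 := by
        intro k
        rw [count_map_snd _ (hfstlt k) y]
        refine Finset.sum_congr rfl fun p _ => finsum_congr fun i => ?_
        have hy : (toLex ((p : ℕ), i), y) = bilet p ⟨(ofLex y).1, hb⟩ i (ofLex y).2 := by
          rw [bilet]
          exact Prod.ext rfl (toLex_ofLex y).symm
        rw [hy, count_bcmToBw]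
      rw [Finset.sum_congr rfl (fun k _ => hcongr k), Finset.sum_comm,
        ← hB.2.2.2.2 ⟨(ofLex y).1, hb⟩ (ofLex y).2]
      refine Finset.sum_congr rfl fun p _ => ?_
      rw [← finsum_sum_swap Finset.univ
        (fun (k : Fin ℓ) i => (B p ⟨(ofLex y).1, hb⟩ i (ofLex y).2).getD (k : ℕ) 0)
        ((hB.1 p ⟨(ofLex y).1, hb⟩).toFinset.image Prod.fst)
        (fun k _ i hi => ?_)]
      · refine finsum_congr fun i => ?_
        refine sum_getD_univ (le_trans (hB.2.2.1 p ⟨(ofLex y).1, hb⟩ i (ofLex y).2) ?_)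
        have := p.2; omega
      · refine Finset.mem_image.2 ⟨(i, (ofLex y).2), ?_, rfl⟩
        rw [Set.Finite.mem_toFinset, Set.mem_setOf_eq]
        intro hc
        apply hi
        show (B p ⟨(ofLex y).1, hb⟩ i (ofLex y).2).getD (k : ℕ) 0 = 0
        rw [show B p ⟨(ofLex y).1, hb⟩ i (ofLex y).2 = [] from hc]
        rfl
    · rw [dif_neg hb]
      refine Finset.sum_eq_zero fun k _ => ?_
      rw [Multiset.count_eq_zero]
      intro hy
      rw [Multiset.mem_map] at hy
      obtain ⟨z, hz, rfl⟩ := hy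
      exact hb (hsndlt k z hz)

lemma bwToBcm_bcmToBw {B : Fin ℓ → Fin ℓ → ℕ → ℕ → List ℕ} (hB : B ∈ BCM ℓ ν μ) :
    bwToBcm (bcmToBw B hB.1) = B := by
  funext p q i j
  rw [bwToBcm]
  have hmap : (List.range (min (p : ℕ) (q : ℕ) + 1)).map (cntAt (bcmToBw B hB.1) p q i j)
      = (List.range (min (p : ℕ) (q : ℕ) + 1)).map (fun k => (B p q i j).getD k 0) := by
    refine List.map_congr_left fun k hk => ?_
    rw [List.mem_range] at hk
    have hkl : k < ℓ := by have := p.2; omega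
    rw [cntAt, dif_pos hkl]
    exact count_bcmToBw B hB.1 p q i j ⟨k, hkl⟩
  rw [hmap, strip_map_range_getD _ _ (hB.2.1 p q i j) (hB.2.2.1 p q i j)]

lemma bcmToBw_bwToBcm {w : Fin ℓ → Multiset (Letter × Letter)} (hw : w ∈ BW ℓ ν μ)
    (hfin : ∀ p q, {x : ℕ × ℕ | bwToBcm w p q x.1 x.2 ≠ []}.Finite) :
    bcmToBw (bwToBcm w) hfin = w := by
  funext k
  refine Multiset.ext.2 fun z => ?_
  by_cases hz : (ofLex z.1).1 < ℓ ∧ (ofLex z.2).1 < ℓ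
  · obtain ⟨h1, h2⟩ := hz
    have hzb : z = bilet ⟨(ofLex z.1).1, h1⟩ ⟨(ofLex z.2).1, h2⟩ (ofLex z.1).2 (ofLex z.2).2 := by
      rw [bilet]
      exact Prod.ext (toLex_ofLex z.1).symm (toLex_ofLex z.2).symm
    rw [hzb, count_bcmToBw, bwToBcm_getD]
    by_cases hk : (k : ℕ) < min (ofLex z.1).1 (ofLex z.2).1 + 1
    · rw [if_pos (by simpa using hk), cntAt, dif_pos k.2]
    · rw [if_neg (by simpa using hk), eq_comm, Multiset.count_eq_zero]
      intro hmem
      have := hw.1 k _ hmem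
      simp only [bilet, ofLex_toLex] at this
      omega
  · have hR : Multiset.count z (bcmToBw (bwToBcm w) hfin k) = 0 := by
      rw [Multiset.count_eq_zero]
      intro hmem
      obtain ⟨p, q, i, j, heq, -⟩ := mem_bcmToBw hmem
      refine hz ?_
      rw [heq]
      simp only [bilet, ofLex_toLex]
      exact ⟨p.2, q.2⟩
    rw [hR, eq_comm, Multiset.count_eq_zero]
    intro hmem
    rcases not_and_or.1 hz with h1 | h2
    · have hc1 : Multiset.count z.1 (alphabetMultiset ℓ ν) = 0 := by
        rw [count_alphabet, dif_neg h1]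
      have hle : Multiset.count z (w k) ≤ Multiset.count z.1 (alphabetMultiset ℓ ν) := by
        rw [← hw.2.1]
        calc Multiset.count z (w k) ≤ Multiset.count z.1 ((w k).map Prod.fst) :=
              count_le_count_map_fst _ _
        _ ≤ Multiset.count z.1 (∑ i, (w i).map Prod.fst) :=
              Multiset.count_le_of_le _
                (Finset.single_le_sum (fun i _ => Multiset.zero_le _) (Finset.mem_univ k))
      have := Multiset.count_pos.2 hmem
      omega
    · have hc2 : Multiset.count z.2 (alphabetMultiset ℓ μ) = 0 := by
        rw [count_alphabet, dif_neg h2]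
      have hle : Multiset.count z (w k) ≤ Multiset.count z.2 (alphabetMultiset ℓ μ) := by
        rw [← hw.2.2]
        calc Multiset.count z (w k) ≤ Multiset.count z.2 ((w k).map Prod.snd) :=
              count_le_count_map_snd _ _
        _ ≤ Multiset.count z.2 (∑ i, (w i).map Prod.snd) :=
              Multiset.count_le_of_le _
                (Finset.single_le_sum (fun i _ => Multiset.zero_le _) (Finset.mem_univ k))
      have := Multiset.count_pos.2 hmem
      omega

end BWBCM3

noncomputable def bwBcmEquiv (ℓ : ℕ) (ν μ : Fin ℓ → List ℕ) : ↥(BW ℓ ν μ) ≃ ↥(BCM ℓ ν μ) where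
  toFun w := ⟨bwToBcm w.1, bwToBcm_mem w.2⟩
  invFun B := ⟨bcmToBw B.1 B.2.1, bcmToBw_mem B.2⟩
  left_inv w := Subtype.ext (bcmToBw_bwToBcm w.2 _)
  right_inv B := Subtype.ext (bwToBcm_bcmToBw B.2)

/-- The sets `BCM_ℓ(ν,μ)`, `BW_ℓ(ν,μ)` and `ParMat♭_{ν,μ}` all have the
same cardinality. -/
theorem bcm_bw_parmat_card (ℓ n : ℕ) (hℓ : 1 ≤ ℓ) (ν μ : Fin ℓ → List ℕ)
    (hν : IsMultiComp ℓ n ν) (hμ : IsMultiComp ℓ n μ) :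
    Nat.card ↥(BCM ℓ ν μ) = Nat.card ↥(BW ℓ ν μ) ∧
    Nat.card ↥(BW ℓ ν μ) = Nat.card ↥(ParMat ℓ ν μ) := by
  constructor
  · exact Nat.card_congr (bwBcmEquiv ℓ ν μ).symm
  · exact Nat.card_congr ((bwBcmEquiv ℓ ν μ).trans (bcmParEquiv ℓ ν μ))
end
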